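/- The class of connected graphs (finite and infinite) is not definable in BndSCL: there is no BndSCL sentence φ in the vocabulary of one binary relation E such that for every graph 𝔊, 𝔊 ⊨_ω φ if and only if 𝔊 is connected. In particular, letting 𝔊₁ = (ℤ, {(n,n+1) : n ∈ ℤ} ∪ {(n+1,n) : n ∈ ℤ}) and 𝔊₂ the disjoint union of two copies of 𝔊₁, the structures 𝔊₁ and 𝔊₂ are elementarily equivalent, 𝔊₁ is connected and 𝔊₂ is not, and every BndSCL sentence true in 𝔊₁ is true in 𝔊₂. -/

import Mathlib

/-
Common formalization of the logics SCL (static computation logic, unbounded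
game-theoretic semantics) and BndSCL (bounded semantics), following the paper
"First-order logic with self-reference".

* Games are played on arbitrary (possibly infinite) arenas; plays are maximal
  walks; strategies are functions from finite walks (histories) to positions;
  infinite plays, and finite plays ending at a dead end where `win` holds for
  neither player, are won by nobody.
* The semantic games are formalized with positions carrying the current
  (sub)formula, an environment binding each label symbol to the labelled
  formula it most recently named (this is the standard closure rendering of
  "reference formula of a claim-symbol occurrence"), the current assignment
  and the polarity (+ = true, − = false).  The bounded game additionally
  carries a clock value.
-/

set_option autoImplicit false

universe u

/-! ## Generic two-player games on (possibly infinite) arenas -/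

inductive Player : Type
  | eloise : Player
  | abelard : Player
deriving DecidableEq

def Player.opp : Player → Player
  | .eloise => .abelard
  | .abelard => .eloise

/-- A game arena: an ownership function (corresponding to the partition
`V = V₀ ∪ V₁`), an edge relation, and a predicate telling which player (if
any) wins a play ending at a given dead-end position. -/
structure GameArena (P : Type u) where
  turn : P → Player
  edge : P → P → Prop
  win : P → Player → Prop

namespace GameArena

variable {P : Type u} (A : GameArena P)

def DeadEnd (u : P) : Prop := ∀ x, ¬ A.edge u x

/-- `w` is a finite nonempty walk whose first element is `v`. -/
def IsWalkFrom (v : P) (w : List P) : Prop :=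
  w.head? = some v ∧ List.Chain' A.edge w

/-- A finite (maximal) play from `v`: a walk whose last element is a dead end. -/
def IsFinitePlay (v : P) (w : List P) : Prop :=
  A.IsWalkFrom v w ∧ ∀ u, w.getLast? = some u → A.DeadEnd u

/-- An infinite play from `v`. -/
def IsInfPlay (v : P) (f : ℕ → P) : Prop :=
  f 0 = v ∧ ∀ n, A.edge (f n) (f (n + 1))

/-- A strategy (a function from histories to positions) of player `pl` is
legal if it always prescribes a move along an edge whenever a move exists. -/
def LegalFor (pl : Player) (v : P) (σ : List P → P) : Prop :=
  ∀ w u, A.IsWalkFrom v w → w.getLast? = some u → A.turn u = pl →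
    (∃ x, A.edge u x) → A.edge u (σ w)

/-- The strategy `σ` of player `pl` is followed in the finite play `w`. -/
def FollowsFin (pl : Player) (σ : List P → P) (w : List P) : Prop :=
  ∀ q u x, (q ++ [x]) <+: w → q.getLast? = some u → A.turn u = pl → x = σ q

/-- The strategy `σ` of player `pl` is followed in the infinite play `f`. -/
def FollowsInf (pl : Player) (σ : List P → P) (f : ℕ → P) : Prop :=
  ∀ n, A.turn (f n) = pl →
    f (n + 1) = σ (List.ofFn fun i : Fin (n + 1) => f i)

/-- `σ` is a winning strategy of player `pl` from `v`: it is legal, every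
finite maximal play following it ends in a dead end won by `pl`, and no
infinite play follows it (infinite plays are won by neither player). -/
def WinningStrategy (pl : Player) (v : P) (σ : List P → P) : Prop :=
  A.LegalFor pl v σ ∧
  (∀ w, A.IsFinitePlay v w → A.FollowsFin pl σ w →
      ∃ u, w.getLast? = some u ∧ A.win u pl) ∧
  (∀ f, A.IsInfPlay v f → ¬ A.FollowsInf pl σ f)

def HasWinningStrategy (pl : Player) (v : P) : Prop :=
  ∃ σ : List P → P, A.WinningStrategy pl v σ

end GameArena

/-- A positional strategy: its moves depend only on the current position. -/
def Positional {P : Type u} (σ : List P → P) : Prop :=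
  ∀ q q' : List P, q.getLast? = q'.getLast? → σ q = σ q'

/-! ## Syntax of SCL / BndSCL -/

/-- A purely relational vocabulary. -/
structure Vocab : Type 1 where
  Rel : Type
  arity : Rel → ℕ

/-- Formulas of SCL / BndSCL over the vocabulary `V`.  Variables and label
symbols are natural numbers; `claim L` is the claim symbol `C_L` and
`lab L φ` is the labelled formula `L φ`. -/
inductive SCLFormula (V : Vocab) : Type
  | bot : SCLFormula V
  | eq (x y : ℕ) : SCLFormula V
  | rel (R : V.Rel) (args : Fin (V.arity R) → ℕ) : SCLFormula V
  | claim (L : ℕ) : SCLFormula V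
  | not (φ : SCLFormula V) : SCLFormula V
  | and (φ ψ : SCLFormula V) : SCLFormula V
  | or (φ ψ : SCLFormula V) : SCLFormula V
  | ex (x : ℕ) (φ : SCLFormula V) : SCLFormula V
  | all (x : ℕ) (φ : SCLFormula V) : SCLFormula V
  | lab (L : ℕ) (φ : SCLFormula V) : SCLFormula V

namespace SCLFormula

variable {V : Vocab}

/-- First-order atoms. -/
def IsFOAtom : SCLFormula V → Prop
  | .bot => True
  | .eq _ _ => True
  | .rel _ _ => True
  | _ => False

/-- Purely first-order formulas (no claim symbols, no label symbols). -/
def IsFO : SCLFormula V → Prop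
  | .bot => True
  | .eq _ _ => True
  | .rel _ _ => True
  | .claim _ => False
  | .not φ => IsFO φ
  | .and φ ψ => IsFO φ ∧ IsFO ψ
  | .or φ ψ => IsFO φ ∧ IsFO ψ
  | .ex _ φ => IsFO φ
  | .all _ φ => IsFO φ
  | .lab _ _ => False

/-- Free (individual) variables. -/
def freeVars : SCLFormula V → Finset ℕ
  | .bot => ∅
  | .eq x y => {x, y}
  | .rel _ a => Finset.image a Finset.univ
  | .claim _ => ∅
  | .not φ => freeVars φ
  | .and φ ψ => freeVars φ ∪ freeVars ψ
  | .or φ ψ => freeVars φ ∪ freeVars ψ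
  | .ex x φ => freeVars φ \ {x}
  | .all x φ => freeVars φ \ {x}
  | .lab _ φ => freeVars φ

/-- All variables occurring in a formula (free or bound). -/
def vars : SCLFormula V → Finset ℕ
  | .bot => ∅
  | .eq x y => {x, y}
  | .rel _ a => Finset.image a Finset.univ
  | .claim _ => ∅
  | .not φ => vars φ
  | .and φ ψ => vars φ ∪ vars ψ
  | .or φ ψ => vars φ ∪ vars ψ
  | .ex x φ => insert x (vars φ)
  | .all x φ => insert x (vars φ)
  | .lab _ φ => vars φ

/-- Sentences: formulas with no free variables. -/
def IsSentence (φ : SCLFormula V) : Prop := freeVars φ = ∅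

end SCLFormula

/-! ## Structures and first-order (Tarski) satisfaction -/

/-- A (suitable) model for vocabulary `V`: a nonempty domain together with an
interpretation of all relation symbols. -/
structure Struct (V : Vocab) where
  Dom : Type u
  dom_nonempty : Nonempty Dom
  interp : ∀ R : V.Rel, (Fin (V.arity R) → Dom) → Prop

attribute [instance] Struct.dom_nonempty

/-- Satisfaction of atoms (false on non-atoms). -/
def atomSat {V : Vocab} (M : Struct.{u} V) (s : ℕ → M.Dom) : SCLFormula V → Prop
  | .bot => False
  | .eq x y => s x = s y
  | .rel R a => M.interp R fun i => s (a i)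
  | _ => False

/-- Standard (Tarski) first-order satisfaction.  It is only meaningful on
purely first-order formulas; claim symbols are interpreted as `False` and
label symbols are ignored. -/
def FOSat {V : Vocab} (M : Struct.{u} V) : (ℕ → M.Dom) → SCLFormula V → Prop
  | _, .bot => False
  | s, .eq x y => s x = s y
  | s, .rel R a => M.interp R fun i => s (a i)
  | _, .claim _ => False
  | s, .not φ => ¬ FOSat M s φ
  | s, .and φ ψ => FOSat M s φ ∧ FOSat M s ψ
  | s, .or φ ψ => FOSat M s φ ∨ FOSat M s ψ
  | s, .ex x φ => ∃ a : M.Dom, FOSat M (Function.update s x a) φ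
  | s, .all x φ => ∀ a : M.Dom, FOSat M (Function.update s x a) φ
  | s, .lab _ φ => FOSat M s φ

/-! ## The evaluation games -/

/-- A position of the semantic game: the current formula, the environment
recording for each label symbol `L` the reference formula `L ψ` it currently
names, the current assignment, and the polarity (`true` = `+`). -/
structure SCLPos (V : Vocab) (D : Type u) : Type u where
  form : SCLFormula V
  env : ℕ → Option (SCLFormula V)
  asg : ℕ → D
  pol : Bool

/-- Which player moves at a given position. (At positions with at most one
successor the owner is irrelevant; we let Eloise own them.) -/
def posTurn {V : Vocab} {D : Type u} (p : SCLPos V D) : Player :=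
  match p.form, p.pol with
  | .and _ _, true => .abelard
  | .and _ _, false => .eloise
  | .or _ _, true => .eloise
  | .or _ _, false => .abelard
  | .all _ _, true => .abelard
  | .all _ _, false => .eloise
  | .ex _ _, true => .eloise
  | .ex _ _, false => .abelard
  | _, _ => .eloise

/-- Who wins a play ending at a given position: at an FO-atom position,
Eloise wins iff the atom's truth value agrees with the polarity, and Abelard
wins otherwise; plays ending anywhere else (e.g. at a claim symbol with no
reference formula, or with clock value 0) are won by neither player. -/
def posWin {V : Vocab} (M : Struct.{u} V) (p : SCLPos V M.Dom) : Player → Prop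
  | .eloise => p.form.IsFOAtom ∧ (atomSat M p.asg p.form ↔ p.pol = true)
  | .abelard => p.form.IsFOAtom ∧ ¬ (atomSat M p.asg p.form ↔ p.pol = true)

/-- Moves of the unbounded evaluation game `G_∞`. -/
inductive UStep {V : Vocab} (M : Struct.{u} V) :
    SCLPos V M.Dom → SCLPos V M.Dom → Prop
  | neg (φ : SCLFormula V) (e : ℕ → Option (SCLFormula V)) (s : ℕ → M.Dom) (b : Bool) :
      UStep M ⟨.not φ, e, s, b⟩ ⟨φ, e, s, !b⟩
  | andLeft (φ ψ : SCLFormula V) (e : ℕ → Option (SCLFormula V)) (s : ℕ → M.Dom) (b : Bool) :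
      UStep M ⟨.and φ ψ, e, s, b⟩ ⟨φ, e, s, b⟩
  | andRight (φ ψ : SCLFormula V) (e : ℕ → Option (SCLFormula V)) (s : ℕ → M.Dom) (b : Bool) :
      UStep M ⟨.and φ ψ, e, s, b⟩ ⟨ψ, e, s, b⟩
  | orLeft (φ ψ : SCLFormula V) (e : ℕ → Option (SCLFormula V)) (s : ℕ → M.Dom) (b : Bool) :
      UStep M ⟨.or φ ψ, e, s, b⟩ ⟨φ, e, s, b⟩
  | orRight (φ ψ : SCLFormula V) (e : ℕ → Option (SCLFormula V)) (s : ℕ → M.Dom) (b : Bool) :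
      UStep M ⟨.or φ ψ, e, s, b⟩ ⟨ψ, e, s, b⟩
  | exStep (x : ℕ) (φ : SCLFormula V) (e : ℕ → Option (SCLFormula V)) (s : ℕ → M.Dom)
      (b : Bool) (a : M.Dom) :
      UStep M ⟨.ex x φ, e, s, b⟩ ⟨φ, e, Function.update s x a, b⟩
  | allStep (x : ℕ) (φ : SCLFormula V) (e : ℕ → Option (SCLFormula V)) (s : ℕ → M.Dom)
      (b : Bool) (a : M.Dom) :
      UStep M ⟨.all x φ, e, s, b⟩ ⟨φ, e, Function.update s x a, b⟩
  | labStep (L : ℕ) (φ : SCLFormula V) (e : ℕ → Option (SCLFormula V)) (s : ℕ → M.Dom)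
      (b : Bool) :
      UStep M ⟨.lab L φ, e, s, b⟩ ⟨φ, Function.update e L (some (.lab L φ)), s, b⟩
  | claimStep (L : ℕ) (e : ℕ → Option (SCLFormula V)) (s : ℕ → M.Dom) (b : Bool)
      (χ : SCLFormula V) (h : e L = some χ) :
      UStep M ⟨.claim L, e, s, b⟩ ⟨χ, e, s, b⟩

/-- Moves of the `n`-bounded evaluation game: positions additionally carry a
clock value, which decreases by one exactly at jumps from a claim symbol to
its reference formula; a claim-symbol position with clock value `0` is a dead
end won by neither player. -/
inductive BStep {V : Vocab} (M : Struct.{u} V) :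
    SCLPos V M.Dom × ℕ → SCLPos V M.Dom × ℕ → Prop
  | neg (φ : SCLFormula V) (e : ℕ → Option (SCLFormula V)) (s : ℕ → M.Dom) (b : Bool) (n : ℕ) :
      BStep M (⟨.not φ, e, s, b⟩, n) (⟨φ, e, s, !b⟩, n)
  | andLeft (φ ψ : SCLFormula V) (e : ℕ → Option (SCLFormula V)) (s : ℕ → M.Dom) (b : Bool)
      (n : ℕ) : BStep M (⟨.and φ ψ, e, s, b⟩, n) (⟨φ, e, s, b⟩, n)
  | andRight (φ ψ : SCLFormula V) (e : ℕ → Option (SCLFormula V)) (s : ℕ → M.Dom) (b : Bool)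
      (n : ℕ) : BStep M (⟨.and φ ψ, e, s, b⟩, n) (⟨ψ, e, s, b⟩, n)
  | orLeft (φ ψ : SCLFormula V) (e : ℕ → Option (SCLFormula V)) (s : ℕ → M.Dom) (b : Bool)
      (n : ℕ) : BStep M (⟨.or φ ψ, e, s, b⟩, n) (⟨φ, e, s, b⟩, n)
  | orRight (φ ψ : SCLFormula V) (e : ℕ → Option (SCLFormula V)) (s : ℕ → M.Dom) (b : Bool)
      (n : ℕ) : BStep M (⟨.or φ ψ, e, s, b⟩, n) (⟨ψ, e, s, b⟩, n)
  | exStep (x : ℕ) (φ : SCLFormula V) (e : ℕ → Option (SCLFormula V)) (s : ℕ → M.Dom)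
      (b : Bool) (n : ℕ) (a : M.Dom) :
      BStep M (⟨.ex x φ, e, s, b⟩, n) (⟨φ, e, Function.update s x a, b⟩, n)
  | allStep (x : ℕ) (φ : SCLFormula V) (e : ℕ → Option (SCLFormula V)) (s : ℕ → M.Dom)
      (b : Bool) (n : ℕ) (a : M.Dom) :
      BStep M (⟨.all x φ, e, s, b⟩, n) (⟨φ, e, Function.update s x a, b⟩, n)
  | labStep (L : ℕ) (φ : SCLFormula V) (e : ℕ → Option (SCLFormula V)) (s : ℕ → M.Dom)
      (b : Bool) (n : ℕ) :
      BStep M (⟨.lab L φ, e, s, b⟩, n) (⟨φ, Function.update e L (some (.lab L φ)), s, b⟩, n)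
  | claimStep (L : ℕ) (e : ℕ → Option (SCLFormula V)) (s : ℕ → M.Dom) (b : Bool)
      (χ : SCLFormula V) (n : ℕ) (h : e L = some χ) :
      BStep M (⟨.claim L, e, s, b⟩, n + 1) (⟨χ, e, s, b⟩, n)

/-- The unbounded evaluation game `G_∞(𝔄, ·, ·)` as a game arena. -/
def gameU {V : Vocab} (M : Struct.{u} V) : GameArena (SCLPos V M.Dom) where
  turn := posTurn
  edge := UStep M
  win := posWin M

/-- The bounded evaluation games `G_n(𝔄, ·, ·)` (for all clock values `n`
simultaneously) as a game arena. -/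
def gameB {V : Vocab} (M : Struct.{u} V) : GameArena (SCLPos V M.Dom × ℕ) where
  turn p := posTurn p.1
  edge := BStep M
  win p := posWin M p.1

/-- The initial position of the evaluation game for `φ` under assignment `s`:
empty environment and positive polarity. -/
def initPos {V : Vocab} {D : Type u} (φ : SCLFormula V) (s : ℕ → D) : SCLPos V D :=
  ⟨φ, fun _ => none, s, true⟩

/-- Truth under the unbounded semantics (the logic SCL):
`𝔄,s ⊨ φ` iff Eloise has a winning strategy in `G_∞(𝔄,s,φ)`. -/
def SCLTrue {V : Vocab} (M : Struct.{u} V) (s : ℕ → M.Dom) (φ : SCLFormula V) : Prop :=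
  (gameU M).HasWinningStrategy .eloise (initPos φ s)

/-! ### The bounded game `G_ω` -/

/-- Positions of the game `G_ω`: the initial position (where Abelard picks a
number `n'`), the intermediate positions (where Eloise picks some `n ≥ n'`),
and the positions of the `n`-bounded games. -/
inductive GOPos (V : Vocab) (D : Type u) : Type u
  | start : GOPos V D
  | mid (n' : ℕ) : GOPos V D
  | inner (p : SCLPos V D) (clock : ℕ) : GOPos V D

inductive GOStep {V : Vocab} (M : Struct.{u} V) (φ : SCLFormula V) (s : ℕ → M.Dom) :
    GOPos V M.Dom → GOPos V M.Dom → Prop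
  | abelardPick (n' : ℕ) : GOStep M φ s .start (.mid n')
  | eloisePick (n' n : ℕ) (h : n' ≤ n) : GOStep M φ s (.mid n') (.inner (initPos φ s) n)
  | play (p q : SCLPos V M.Dom) (m k : ℕ) (h : BStep M (p, m) (q, k)) :
      GOStep M φ s (.inner p m) (.inner q k)

def goTurn {V : Vocab} {D : Type u} : GOPos V D → Player
  | .start => .abelard
  | .mid _ => .eloise
  | .inner p _ => posTurn p

def goWin {V : Vocab} (M : Struct.{u} V) : GOPos V M.Dom → Player → Prop
  | .inner p _, pl => posWin M p pl
  | _, _ => False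

/-- The bounded evaluation game `G_ω(𝔄,s,φ)`: Abelard picks `n' ∈ ℕ`, then
Eloise picks `n ≥ n'`, and then `G_n(𝔄,s,φ)` is played. -/
def gameOmega {V : Vocab} (M : Struct.{u} V) (φ : SCLFormula V) (s : ℕ → M.Dom) :
    GameArena (GOPos V M.Dom) where
  turn := goTurn
  edge := GOStep M φ s
  win := goWin M

/-- Truth under the bounded semantics (the logic BndSCL):
`𝔄,s ⊨_ω φ` iff Eloise has a winning strategy in `G_ω(𝔄,s,φ)`. -/
def BndTrue {V : Vocab} (M : Struct.{u} V) (s : ℕ → M.Dom) (φ : SCLFormula V) : Prop :=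
  (gameOmega M φ s).HasWinningStrategy .eloise .start

/-! ## Approximants -/

/-- Auxiliary structural recursion for approximants: `k` tells what to put in
place of a claim symbol.  Label symbols are deleted (while updating the
environment), and polarity is tracked through negations. -/
def approxCore {V : Vocab}
    (k : (ℕ → Option (SCLFormula V)) → Bool → ℕ → SCLFormula V) :
    (ℕ → Option (SCLFormula V)) → Bool → SCLFormula V → SCLFormula V
  | _, _, .bot => .bot
  | _, _, .eq x y => .eq x y
  | _, _, .rel R a => .rel R a
  | e, b, .claim L => k e b L
  | e, b, .not φ => .not (approxCore k e (!b) φ)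
  | e, b, .and φ ψ => .and (approxCore k e b φ) (approxCore k e b ψ)
  | e, b, .or φ ψ => .or (approxCore k e b φ) (approxCore k e b ψ)
  | e, b, .ex x φ => .ex x (approxCore k e b φ)
  | e, b, .all x φ => .all x (approxCore k e b φ)
  | e, b, .lab L φ => approxCore k (Function.update e L (some (.lab L φ))) b φ

/-- `approx n e b φ` unfolds each claim symbol of `φ` (in environment `e`,
under polarity `b`) through `n` jumps to reference formulas; claim symbols
reached with exhausted budget (or with no reference formula) are replaced by
`⊥` at positive occurrences and `⊤` (i.e. `¬⊥`) at negative occurrences, and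
all label symbols are deleted. -/
def approx {V : Vocab} : ℕ → (ℕ → Option (SCLFormula V)) → Bool → SCLFormula V → SCLFormula V
  | 0 => approxCore fun _ b _ => if b then .bot else .not .bot
  | n + 1 => approxCore fun e b L =>
      match e L with
      | some χ => approx n e b χ
      | none => if b then .bot else .not .bot

/-- The `n`-th approximant `Φⁿ_φ` of `φ`: the first-order formula obtained
from the `n`-th unfolding of `φ` by deleting all label symbols and replacing
positive claim occurrences by `⊥` and negative ones by `⊤`. -/
def approximant {V : Vocab} (φ : SCLFormula V) (n : ℕ) : SCLFormula V :=
  approx n (fun _ => none) true φ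

/-! ## Directed graphs as structures over one binary relation symbol -/

/-- The vocabulary with a single binary relation symbol. -/
abbrev binVocab : Vocab := ⟨Unit, fun _ => 2⟩

/-- The edge relation of a `binVocab`-structure. -/
def Edge (M : Struct.{u} binVocab) (a b : M.Dom) : Prop :=
  M.interp Unit.unit (fun i => if i.val = 0 then a else b)

/-- The atomic formula `E x y` (for variables `x`, `y`). -/
def Eform (x y : ℕ) : SCLFormula binVocab :=
  .rel Unit.unit (fun i => if i.val = 0 then x else y)

/-- `M` is a graph: the edge relation is symmetric. -/
def IsGraph (M : Struct.{u} binVocab) : Prop :=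
  ∀ a b : M.Dom, Edge M a b → Edge M b a

/-- `M` is connected: any two distinct vertices are joined by a finite path. -/
def GraphConnected (M : Struct.{u} binVocab) : Prop :=
  ∀ u v : M.Dom, u ≠ v →
    ∃ (n : ℕ) (f : ℕ → M.Dom), f 0 = u ∧ f n = v ∧
      ∀ i, i < n → Edge M (f i) (f (i + 1))

/-- Two nodes of `ℤ` are adjacent if they differ by one. -/
def adjZ (a b : ℤ) : Prop := b = a + 1 ∨ a = b + 1

/-- The graph `𝔊₁ = (ℤ, {(n,n+1)} ∪ {(n+1,n)})`. -/
def G1 : Struct.{u} binVocab where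
  Dom := ULift.{u} ℤ
  dom_nonempty := ⟨⟨0⟩⟩
  interp := fun _ t =>
    adjZ (t ⟨0, Nat.zero_lt_two⟩).down (t ⟨1, Nat.one_lt_two⟩).down

/-- The graph `𝔊₂`: the disjoint union of two copies of `𝔊₁`. -/
def G2 : Struct.{u} binVocab where
  Dom := ULift.{u} ℤ × Bool
  dom_nonempty := ⟨(⟨0⟩, false)⟩
  interp := fun _ t =>
    (t ⟨0, Nat.zero_lt_two⟩).2 = (t ⟨1, Nat.one_lt_two⟩).2 ∧
      adjZ (t ⟨0, Nat.zero_lt_two⟩).1.down (t ⟨1, Nat.one_lt_two⟩).1.down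


/-! ## Auxiliary development -/

section Aux

variable {V : Vocab} (M : Struct.{u} V)

/-- Simp lemmas for `approx`. -/
theorem approx_bot (n : ℕ) (e : ℕ → Option (SCLFormula V)) (b : Bool) :
    approx n e b .bot = .bot := by cases n <;> rfl

theorem approx_eq (n : ℕ) (e : ℕ → Option (SCLFormula V)) (b : Bool) (x y : ℕ) :
    approx n e b (.eq x y) = .eq x y := by cases n <;> rfl

theorem approx_rel (n : ℕ) (e : ℕ → Option (SCLFormula V)) (b : Bool) (R : V.Rel)
    (a : Fin (V.arity R) → ℕ) : approx n e b (.rel R a) = .rel R a := by cases n <;> rfl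

theorem approx_not (n : ℕ) (e : ℕ → Option (SCLFormula V)) (b : Bool) (φ : SCLFormula V) :
    approx n e b (.not φ) = .not (approx n e (!b) φ) := by cases n <;> rfl

theorem approx_and (n : ℕ) (e : ℕ → Option (SCLFormula V)) (b : Bool) (φ ψ : SCLFormula V) :
    approx n e b (.and φ ψ) = .and (approx n e b φ) (approx n e b ψ) := by cases n <;> rfl

theorem approx_or (n : ℕ) (e : ℕ → Option (SCLFormula V)) (b : Bool) (φ ψ : SCLFormula V) :
    approx n e b (.or φ ψ) = .or (approx n e b φ) (approx n e b ψ) := by cases n <;> rfl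

theorem approx_ex (n : ℕ) (e : ℕ → Option (SCLFormula V)) (b : Bool) (x : ℕ) (φ : SCLFormula V) :
    approx n e b (.ex x φ) = .ex x (approx n e b φ) := by cases n <;> rfl

theorem approx_all (n : ℕ) (e : ℕ → Option (SCLFormula V)) (b : Bool) (x : ℕ) (φ : SCLFormula V) :
    approx n e b (.all x φ) = .all x (approx n e b φ) := by cases n <;> rfl

theorem approx_lab (n : ℕ) (e : ℕ → Option (SCLFormula V)) (b : Bool) (L : ℕ) (φ : SCLFormula V) :
    approx n e b (.lab L φ) = approx n (Function.update e L (some (.lab L φ))) b φ := by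
  cases n <;> rfl

theorem approx_claim_zero (e : ℕ → Option (SCLFormula V)) (b : Bool) (L : ℕ) :
    approx 0 e b (.claim L) = if b then .bot else .not .bot := rfl

theorem approx_claim_succ (n : ℕ) (e : ℕ → Option (SCLFormula V)) (b : Bool) (L : ℕ) :
    approx (n + 1) e b (.claim L) =
      match e L with
      | some χ => approx n e b χ
      | none => if b then .bot else .not .bot := rfl

/-- The truth condition tracked along plays of the bounded games. -/
def Pol (n : ℕ) (e : ℕ → Option (SCLFormula V)) (b : Bool) (ψ : SCLFormula V)
    (s : ℕ → M.Dom) : Prop :=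
  FOSat M s (approx n e b ψ) ↔ b = true

theorem pol_claim_zero (e : ℕ → Option (SCLFormula V)) (b : Bool) (L : ℕ) (s : ℕ → M.Dom) :
    ¬ Pol M 0 e b (.claim L) s := by
  cases b <;> simp [Pol, approx_claim_zero, FOSat]

theorem pol_claim_none (n : ℕ) (e : ℕ → Option (SCLFormula V)) (b : Bool) (L : ℕ)
    (s : ℕ → M.Dom) (h : e L = none) : ¬ Pol M n e b (.claim L) s := by
  cases n with
  | zero => exact pol_claim_zero M e b L s
  | succ n => cases b <;> simp [Pol, approx_claim_succ, h, FOSat]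

theorem pol_claim_some (n : ℕ) (e : ℕ → Option (SCLFormula V)) (b : Bool) (L : ℕ)
    (s : ℕ → M.Dom) (χ : SCLFormula V) (h : e L = some χ) :
    Pol M (n + 1) e b (.claim L) s ↔ Pol M n e b χ s := by
  simp [Pol, approx_claim_succ, h]

theorem pol_not (n : ℕ) (e : ℕ → Option (SCLFormula V)) (b : Bool) (φ : SCLFormula V)
    (s : ℕ → M.Dom) : Pol M n e b (.not φ) s ↔ Pol M n e (!b) φ s := by
  cases b <;> simp [Pol, approx_not, FOSat]

theorem pol_lab (n : ℕ) (e : ℕ → Option (SCLFormula V)) (b : Bool) (L : ℕ) (φ : SCLFormula V)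
    (s : ℕ → M.Dom) :
    Pol M n e b (.lab L φ) s ↔ Pol M n (Function.update e L (some (.lab L φ))) b φ s := by
  simp [Pol, approx_lab]

theorem pol_true (n : ℕ) (e : ℕ → Option (SCLFormula V)) (ψ : SCLFormula V) (s : ℕ → M.Dom) :
    Pol M n e true ψ s ↔ FOSat M s (approx n e true ψ) := by simp [Pol]

theorem pol_false (n : ℕ) (e : ℕ → Option (SCLFormula V)) (ψ : SCLFormula V) (s : ℕ → M.Dom) :
    Pol M n e false ψ s ↔ ¬ FOSat M s (approx n e false ψ) := by simp [Pol]

theorem pol_and_true (n : ℕ) (e : ℕ → Option (SCLFormula V)) (φ ψ : SCLFormula V)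
    (s : ℕ → M.Dom) :
    Pol M n e true (.and φ ψ) s ↔ (Pol M n e true φ s ∧ Pol M n e true ψ s) := by
  simp [Pol, approx_and, FOSat]

theorem pol_and_false (n : ℕ) (e : ℕ → Option (SCLFormula V)) (φ ψ : SCLFormula V)
    (s : ℕ → M.Dom) :
    Pol M n e false (.and φ ψ) s ↔ (Pol M n e false φ s ∨ Pol M n e false ψ s) := by
  simp only [Pol, approx_and, FOSat, Bool.false_eq_true, iff_false]
  exact not_and_or

theorem pol_or_true (n : ℕ) (e : ℕ → Option (SCLFormula V)) (φ ψ : SCLFormula V)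
    (s : ℕ → M.Dom) :
    Pol M n e true (.or φ ψ) s ↔ (Pol M n e true φ s ∨ Pol M n e true ψ s) := by
  simp [Pol, approx_or, FOSat]

theorem pol_or_false (n : ℕ) (e : ℕ → Option (SCLFormula V)) (φ ψ : SCLFormula V)
    (s : ℕ → M.Dom) :
    Pol M n e false (.or φ ψ) s ↔ (Pol M n e false φ s ∧ Pol M n e false ψ s) := by
  simp only [Pol, approx_or, FOSat, Bool.false_eq_true, iff_false]
  exact not_or

theorem pol_ex_true (n : ℕ) (e : ℕ → Option (SCLFormula V)) (x : ℕ) (φ : SCLFormula V)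
    (s : ℕ → M.Dom) :
    Pol M n e true (.ex x φ) s ↔ ∃ a : M.Dom, Pol M n e true φ (Function.update s x a) := by
  simp [Pol, approx_ex, FOSat]

theorem pol_ex_false (n : ℕ) (e : ℕ → Option (SCLFormula V)) (x : ℕ) (φ : SCLFormula V)
    (s : ℕ → M.Dom) :
    Pol M n e false (.ex x φ) s ↔ ∀ a : M.Dom, Pol M n e false φ (Function.update s x a) := by
  simp only [Pol, approx_ex, FOSat, Bool.false_eq_true, iff_false]
  exact not_exists

theorem pol_all_true (n : ℕ) (e : ℕ → Option (SCLFormula V)) (x : ℕ) (φ : SCLFormula V)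
    (s : ℕ → M.Dom) :
    Pol M n e true (.all x φ) s ↔ ∀ a : M.Dom, Pol M n e true φ (Function.update s x a) := by
  simp [Pol, approx_all, FOSat]

theorem pol_all_false (n : ℕ) (e : ℕ → Option (SCLFormula V)) (x : ℕ) (φ : SCLFormula V)
    (s : ℕ → M.Dom) :
    Pol M n e false (.all x φ) s ↔ ∃ a : M.Dom, Pol M n e false φ (Function.update s x a) := by
  simp only [Pol, approx_all, FOSat, Bool.false_eq_true, iff_false]
  exact not_forall

theorem pol_atom (n : ℕ) (e : ℕ → Option (SCLFormula V)) (b : Bool) (ψ : SCLFormula V)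
    (s : ℕ → M.Dom) (hat : ψ.IsFOAtom) :
    Pol M n e b ψ s ↔ (atomSat M s ψ ↔ b = true) := by
  cases ψ <;> simp [SCLFormula.IsFOAtom] at hat <;>
    simp [Pol, approx_bot, approx_eq, approx_rel, FOSat, atomSat]

theorem pol_mono : ∀ n n', n ≤ n' → ∀ ψ : SCLFormula V, ∀ e b s,
    Pol M n e b ψ s → Pol M n' e b ψ s := by
  intro n
  induction n with
  | zero =>
    intro n' _ ψ
    induction ψ with
    | bot => intro e b s h
             rwa [pol_atom M _ _ _ _ _ (by trivial)] at h ⊢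
    | eq x y => intro e b s h
                rwa [pol_atom M _ _ _ _ _ (by trivial)] at h ⊢
    | rel R a => intro e b s h
                 rwa [pol_atom M _ _ _ _ _ (by trivial)] at h ⊢
    | claim L => intro e b s h; exact absurd h (pol_claim_zero M e b L s)
    | not φ ih => intro e b s h
                  rw [pol_not] at h ⊢; exact ih _ _ _ h
    | and φ ψ ihφ ihψ =>
        intro e b s h
        cases b
        · rw [pol_and_false] at h ⊢
          exact h.imp (ihφ _ _ _) (ihψ _ _ _)
        · rw [pol_and_true] at h ⊢
          exact ⟨ihφ _ _ _ h.1, ihψ _ _ _ h.2⟩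
    | or φ ψ ihφ ihψ =>
        intro e b s h
        cases b
        · rw [pol_or_false] at h ⊢
          exact ⟨ihφ _ _ _ h.1, ihψ _ _ _ h.2⟩
        · rw [pol_or_true] at h ⊢
          exact h.imp (ihφ _ _ _) (ihψ _ _ _)
    | ex x φ ih =>
        intro e b s h
        cases b
        · rw [pol_ex_false] at h ⊢
          exact fun a => ih _ _ _ (h a)
        · rw [pol_ex_true] at h ⊢
          exact h.imp fun a ha => ih _ _ _ ha
    | all x φ ih =>
        intro e b s h
        cases b
        · rw [pol_all_false] at h ⊢
          exact h.imp fun a ha => ih _ _ _ ha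
        · rw [pol_all_true] at h ⊢
          exact fun a => ih _ _ _ (h a)
    | lab L φ ih => intro e b s h; rw [pol_lab] at h ⊢; exact ih _ _ _ h
  | succ n ihn =>
    intro n' hle ψ
    match n', hle with
    | n' + 1, hle =>
      have hle' : n ≤ n' := Nat.succ_le_succ_iff.mp hle
      induction ψ with
      | bot => intro e b s h
               rwa [pol_atom M _ _ _ _ _ (by trivial)] at h ⊢
      | eq x y => intro e b s h
                  rwa [pol_atom M _ _ _ _ _ (by trivial)] at h ⊢
      | rel R a => intro e b s h
                   rwa [pol_atom M _ _ _ _ _ (by trivial)] at h ⊢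
      | claim L =>
          intro e b s h
          cases hL : e L with
          | none => exact absurd h (pol_claim_none M _ e b L s hL)
          | some χ =>
              rw [pol_claim_some M _ e b L s χ hL] at h ⊢
              exact ihn n' hle' χ e b s h
      | not φ ih => intro e b s h
                    rw [pol_not] at h ⊢; exact ih _ _ _ h
      | and φ ψ ihφ ihψ =>
          intro e b s h
          cases b
          · rw [pol_and_false] at h ⊢
            exact h.imp (ihφ _ _ _) (ihψ _ _ _)
          · rw [pol_and_true] at h ⊢
            exact ⟨ihφ _ _ _ h.1, ihψ _ _ _ h.2⟩
      | or φ ψ ihφ ihψ =>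
          intro e b s h
          cases b
          · rw [pol_or_false] at h ⊢
            exact ⟨ihφ _ _ _ h.1, ihψ _ _ _ h.2⟩
          · rw [pol_or_true] at h ⊢
            exact h.imp (ihφ _ _ _) (ihψ _ _ _)
      | ex x φ ih =>
          intro e b s h
          cases b
          · rw [pol_ex_false] at h ⊢
            exact fun a => ih _ _ _ (h a)
          · rw [pol_ex_true] at h ⊢
            exact h.imp fun a ha => ih _ _ _ ha
      | all x φ ih =>
          intro e b s h
          cases b
          · rw [pol_all_false] at h ⊢
            exact h.imp fun a ha => ih _ _ _ ha
          · rw [pol_all_true] at h ⊢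
            exact fun a => ih _ _ _ (h a)
      | lab L φ ih => intro e b s h; rw [pol_lab] at h ⊢; exact ih _ _ _ h

open Classical in
/-- Eloise's canonical move in the bounded game. -/
noncomputable def bmove : SCLPos V M.Dom × ℕ → SCLPos V M.Dom × ℕ
  | (⟨.not φ, e, s, b⟩, m) => (⟨φ, e, s, !b⟩, m)
  | (⟨.and φ ψ, e, s, b⟩, m) =>
      if FOSat M s (approx m e b φ) then (⟨ψ, e, s, b⟩, m) else (⟨φ, e, s, b⟩, m)
  | (⟨.or φ ψ, e, s, b⟩, m) =>
      if FOSat M s (approx m e b φ) then (⟨φ, e, s, b⟩, m) else (⟨ψ, e, s, b⟩, m)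
  | (⟨.ex x φ, e, s, b⟩, m) =>
      if h : ∃ a, FOSat M (Function.update s x a) (approx m e b φ) then
        (⟨φ, e, Function.update s x (Classical.choose h), b⟩, m)
      else (⟨φ, e, Function.update s x (Classical.arbitrary M.Dom), b⟩, m)
  | (⟨.all x φ, e, s, b⟩, m) =>
      if h : ∃ a, ¬ FOSat M (Function.update s x a) (approx m e b φ) then
        (⟨φ, e, Function.update s x (Classical.choose h), b⟩, m)
      else (⟨φ, e, Function.update s x (Classical.arbitrary M.Dom), b⟩, m)
  | (⟨.lab L φ, e, s, b⟩, m) => (⟨φ, Function.update e L (some (.lab L φ)), s, b⟩, m)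
  | (⟨.claim L, e, s, b⟩, m) =>
      (match e L, m with
      | some χ, m' + 1 => (⟨χ, e, s, b⟩, m')
      | _, _ => (⟨.claim L, e, s, b⟩, m))
  | u => u

/-- The invariant on positions of the bounded games. -/
def IPos (u : SCLPos V M.Dom × ℕ) : Prop := Pol M u.2 u.1.env u.1.pol u.1.form u.1.asg

theorem bstep_atom {ψ : SCLFormula V} {e s b m} {z} (hat : ψ.IsFOAtom)
    (h : BStep M (⟨ψ, e, s, b⟩, m) z) : False := by
  cases h <;> simp [SCLFormula.IsFOAtom] at hat

theorem I_bmove {u : SCLPos V M.Dom × ℕ} (hI : IPos M u) (hna : ¬ u.1.form.IsFOAtom) :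
    BStep M u (bmove M u) ∧ IPos M (bmove M u) := by
  rcases u with ⟨⟨ψ, e, s, b⟩, m⟩
  have hI' : Pol M m e b ψ s := hI
  cases ψ with
  | bot => exact absurd trivial hna
  | eq x y => exact absurd trivial hna
  | rel R a => exact absurd trivial hna
  | not φ =>
      exact ⟨BStep.neg φ e s b m, (pol_not M m e b φ s).mp hI'⟩
  | and φ ψ =>
      by_cases hc : FOSat M s (approx m e b φ)
      · refine ⟨?_, ?_⟩ <;> simp only [bmove, hc, if_true]
        · exact BStep.andRight φ ψ e s b m
        · cases b
          · rcases (pol_and_false M m e φ ψ s).mp hI' with h | h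
            · exact absurd hc ((pol_false M m e φ s).mp h)
            · exact h
          · exact ((pol_and_true M m e φ ψ s).mp hI').2
      · refine ⟨?_, ?_⟩ <;> simp only [bmove, hc, if_false]
        · exact BStep.andLeft φ ψ e s b m
        · cases b
          · exact (pol_false M m e φ s).mpr hc
          · exact ((pol_and_true M m e φ ψ s).mp hI').1
  | or φ ψ =>
      by_cases hc : FOSat M s (approx m e b φ)
      · refine ⟨?_, ?_⟩ <;> simp only [bmove, hc, if_true]
        · exact BStep.orLeft φ ψ e s b m
        · cases b
          · exact ((pol_or_false M m e φ ψ s).mp hI').1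
          · exact (pol_true M m e φ s).mpr hc
      · refine ⟨?_, ?_⟩ <;> simp only [bmove, hc, if_false]
        · exact BStep.orRight φ ψ e s b m
        · cases b
          · exact ((pol_or_false M m e φ ψ s).mp hI').2
          · rcases (pol_or_true M m e φ ψ s).mp hI' with h | h
            · exact absurd ((pol_true M m e φ s).mp h) hc
            · exact h
  | ex x φ =>
      by_cases hc : ∃ a, FOSat M (Function.update s x a) (approx m e b φ)
      · refine ⟨?_, ?_⟩ <;> simp only [bmove, hc, dif_pos]
        · exact BStep.exStep x φ e s b m _
        · cases b
          · exact (pol_ex_false M m e x φ s).mp hI' _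
          · exact (pol_true M m e φ _).mpr (Classical.choose_spec hc)
      · refine ⟨?_, ?_⟩ <;> simp only [bmove, hc, dif_neg, not_false_iff]
        · exact BStep.exStep x φ e s b m _
        · cases b
          · exact (pol_ex_false M m e x φ s).mp hI' _
          · rcases (pol_ex_true M m e x φ s).mp hI' with ⟨a, ha⟩
            exact absurd ⟨a, (pol_true M m e φ _).mp ha⟩ hc
  | all x φ =>
      by_cases hc : ∃ a, ¬ FOSat M (Function.update s x a) (approx m e b φ)
      · refine ⟨?_, ?_⟩ <;> simp only [bmove, hc, dif_pos]
        · exact BStep.allStep x φ e s b m _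
        · cases b
          · exact (pol_false M m e φ _).mpr (Classical.choose_spec hc)
          · exact (pol_all_true M m e x φ s).mp hI' _
      · refine ⟨?_, ?_⟩ <;> simp only [bmove, hc, dif_neg, not_false_iff]
        · exact BStep.allStep x φ e s b m _
        · cases b
          · rcases (pol_all_false M m e x φ s).mp hI' with ⟨a, ha⟩
            exact absurd ⟨a, (pol_false M m e φ _).mp ha⟩ hc
          · exact (pol_all_true M m e x φ s).mp hI' _
  | lab L φ =>
      exact ⟨BStep.labStep L φ e s b m, (pol_lab M m e b L φ s).mp hI'⟩
  | claim L =>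
      cases hL : e L with
      | none => exact absurd hI' (pol_claim_none M m e b L s hL)
      | some χ =>
          cases m with
          | zero => exact absurd hI' (pol_claim_zero M e b L s)
          | succ m' =>
              refine ⟨?_, ?_⟩ <;> simp only [bmove, hL]
              · exact BStep.claimStep L e s b χ m' hL
              · exact (pol_claim_some M m' e b L s χ hL).mp hI'

theorem I_step_abelard {u z : SCLPos V M.Dom × ℕ} (hI : IPos M u) (h : BStep M u z)
    (ht : posTurn u.1 = .abelard) : IPos M z := by
  cases h with
  | neg φ e s b n => simp [posTurn] at ht
  | andLeft φ ψ e s b n =>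
      cases b
      · simp [posTurn] at ht
      · exact ((pol_and_true M n e φ ψ s).mp hI).1
  | andRight φ ψ e s b n =>
      cases b
      · simp [posTurn] at ht
      · exact ((pol_and_true M n e φ ψ s).mp hI).2
  | orLeft φ ψ e s b n =>
      cases b
      · exact ((pol_or_false M n e φ ψ s).mp hI).1
      · simp [posTurn] at ht
  | orRight φ ψ e s b n =>
      cases b
      · exact ((pol_or_false M n e φ ψ s).mp hI).2
      · simp [posTurn] at ht
  | exStep x φ e s b n a =>
      cases b
      · exact (pol_ex_false M n e x φ s).mp hI a
      · simp [posTurn] at ht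
  | allStep x φ e s b n a =>
      cases b
      · simp [posTurn] at ht
      · exact (pol_all_true M n e x φ s).mp hI a
  | labStep L φ e s b n => simp [posTurn] at ht
  | claimStep L e s b χ n hL => simp [posTurn] at ht

theorem I_deadend {u : SCLPos V M.Dom × ℕ} (hI : IPos M u) (hd : ∀ z, ¬ BStep M u z) :
    posWin M u.1 .eloise := by
  rcases u with ⟨⟨ψ, e, s, b⟩, m⟩
  have hI' : Pol M m e b ψ s := hI
  cases ψ with
  | bot => exact ⟨trivial, (pol_atom M m e b _ s (by trivial)).mp hI'⟩
  | eq x y => exact ⟨trivial, (pol_atom M m e b _ s (by trivial)).mp hI'⟩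
  | rel R a => exact ⟨trivial, (pol_atom M m e b _ s (by trivial)).mp hI'⟩
  | not φ => exact absurd (BStep.neg φ e s b m) (hd _)
  | and φ ψ => exact absurd (BStep.andLeft φ ψ e s b m) (hd _)
  | or φ ψ => exact absurd (BStep.orLeft φ ψ e s b m) (hd _)
  | ex x φ => exact absurd (BStep.exStep x φ e s b m (Classical.arbitrary M.Dom)) (hd _)
  | all x φ => exact absurd (BStep.allStep x φ e s b m (Classical.arbitrary M.Dom)) (hd _)
  | lab L φ => exact absurd (BStep.labStep L φ e s b m) (hd _)
  | claim L =>
      cases hL : e L with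
      | none => exact absurd hI' (pol_claim_none M m e b L s hL)
      | some χ =>
          cases m with
          | zero => exact absurd hI' (pol_claim_zero M e b L s)
          | succ m' => exact absurd (BStep.claimStep L e s b χ m' hL) (hd _)

/-- The bounded game is well-founded. -/
theorem bstep_acc : ∀ (m : ℕ) (ψ : SCLFormula V) (e : ℕ → Option (SCLFormula V))
    (s : ℕ → M.Dom) (b : Bool), Acc (fun a c => BStep M c a) ((⟨ψ, e, s, b⟩ : SCLPos V M.Dom), m) := by
  intro m
  induction m with
  | zero =>
      intro ψ
      induction ψ with
      | bot => intro e s b; exact ⟨_, fun y hy => absurd hy (fun h => bstep_atom M (by trivial) h)⟩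
      | eq x y => intro e s b; exact ⟨_, fun y hy => absurd hy (fun h => bstep_atom M (by trivial) h)⟩
      | rel R a => intro e s b; exact ⟨_, fun y hy => absurd hy (fun h => bstep_atom M (by trivial) h)⟩
      | claim L => intro e s b; refine ⟨_, fun y hy => ?_⟩; cases hy
      | not φ ih => intro e s b; refine ⟨_, fun y hy => ?_⟩; cases hy; exact ih _ _ _
      | and φ ψ ihφ ihψ =>
          intro e s b; refine ⟨_, fun y hy => ?_⟩
          cases hy
          · exact ihφ _ _ _
          · exact ihψ _ _ _
      | or φ ψ ihφ ihψ =>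
          intro e s b; refine ⟨_, fun y hy => ?_⟩
          cases hy
          · exact ihφ _ _ _
          · exact ihψ _ _ _
      | ex x φ ih => intro e s b; refine ⟨_, fun y hy => ?_⟩; cases hy; exact ih _ _ _
      | all x φ ih => intro e s b; refine ⟨_, fun y hy => ?_⟩; cases hy; exact ih _ _ _
      | lab L φ ih => intro e s b; refine ⟨_, fun y hy => ?_⟩; cases hy; exact ih _ _ _
  | succ m ihm =>
      intro ψ
      induction ψ with
      | bot => intro e s b; exact ⟨_, fun y hy => absurd hy (fun h => bstep_atom M (by trivial) h)⟩
      | eq x y => intro e s b; exact ⟨_, fun y hy => absurd hy (fun h => bstep_atom M (by trivial) h)⟩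
      | rel R a => intro e s b; exact ⟨_, fun y hy => absurd hy (fun h => bstep_atom M (by trivial) h)⟩
      | claim L => intro e s b; refine ⟨_, fun y hy => ?_⟩; cases hy; exact ihm _ _ _ _
      | not φ ih => intro e s b; refine ⟨_, fun y hy => ?_⟩; cases hy; exact ih _ _ _
      | and φ ψ ihφ ihψ =>
          intro e s b; refine ⟨_, fun y hy => ?_⟩
          cases hy
          · exact ihφ _ _ _
          · exact ihψ _ _ _
      | or φ ψ ihφ ihψ =>
          intro e s b; refine ⟨_, fun y hy => ?_⟩
          cases hy
          · exact ihφ _ _ _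
          · exact ihψ _ _ _
      | ex x φ ih => intro e s b; refine ⟨_, fun y hy => ?_⟩; cases hy; exact ih _ _ _
      | all x φ ih => intro e s b; refine ⟨_, fun y hy => ?_⟩; cases hy; exact ih _ _ _
      | lab L φ ih => intro e s b; refine ⟨_, fun y hy => ?_⟩; cases hy; exact ih _ _ _

theorem acc_no_descend {α : Sort*} {r : α → α → Prop} {a : α} (h : Acc r a) :
    ∀ f : ℕ → α, f 0 = a → (∀ n, r (f (n + 1)) (f n)) → False := by
  induction h with
  | intro x hx ih =>
      intro f h0 hstep
      exact ih (f 1) (h0 ▸ hstep 0) (fun n => f (n + 1)) rfl (fun n => hstep (n + 1))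

theorem prefix_snoc_iff {α : Type*} {l w : List α} {a : α} :
    l <+: w ++ [a] ↔ l <+: w ∨ l = w ++ [a] := by
  constructor
  · rintro ⟨t, ht⟩
    induction t using List.reverseRecOn with
    | nil => right; simpa using ht
    | append_singleton t x _ =>
        left
        rw [← List.append_assoc] at ht
        rcases List.append_inj' ht rfl with ⟨h1, _⟩
        exact ⟨t, h1⟩
  · rintro (h | rfl)
    · exact h.trans (List.prefix_append w [a])
    · exact List.prefix_refl _

theorem walk_snoc {P : Type u} (A : GameArena P) {v u x : P} {w : List P}
    (hw : A.IsWalkFrom v w) (hu : w.getLast? = some u) (he : A.edge u x) :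
    A.IsWalkFrom v (w ++ [x]) := by
  refine ⟨?_, ?_⟩
  · have hne : w ≠ [] := by rintro rfl; simp at hu
    rw [List.head?_append, hw.1]; rfl
  · refine List.isChain_append.mpr ?_
    refine ⟨hw.2, List.isChain_singleton x, ?_⟩
    intro y hy z hz
    rw [hu] at hy
    simp only [Option.mem_def, Option.some.injEq, List.head?_cons] at hy hz
    subst hy; subst hz; exact he

theorem follows_snoc {P : Type u} (A : GameArena P) {pl : Player} {σ : List P → P} {u x : P}
    {w : List P} (hf : A.FollowsFin pl σ w) (hu : w.getLast? = some u)
    (hx : A.turn u = pl → x = σ w) : A.FollowsFin pl σ (w ++ [x]) := by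
  intro q u' x' hpre hq ht
  rcases prefix_snoc_iff.mp hpre with h | h
  · exact hf q u' x' h hq ht
  · rcases List.append_inj' h rfl with ⟨rfl, h2⟩
    simp only [List.cons.injEq, and_true] at h2
    subst h2
    rw [hu] at hq
    cases hq
    exact hx ht

theorem follows_prefix {P : Type u} (A : GameArena P) {pl : Player} {σ : List P → P}
    {w q : List P} (hf : A.FollowsFin pl σ w) (hq : q <+: w) : A.FollowsFin pl σ q :=
  fun r u x hpre hr ht => hf r u x (hpre.trans hq) hr ht

theorem bmove_edge {u : SCLPos V M.Dom × ℕ} (hex : ∃ z, BStep M u z) :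
    BStep M u (bmove M u) := by
  rcases u with ⟨⟨ψ, e, s, b⟩, m⟩
  cases ψ with
  | bot => exact absurd hex (by rintro ⟨z, hz⟩; exact bstep_atom M (by trivial) hz)
  | eq x y => exact absurd hex (by rintro ⟨z, hz⟩; exact bstep_atom M (by trivial) hz)
  | rel R a => exact absurd hex (by rintro ⟨z, hz⟩; exact bstep_atom M (by trivial) hz)
  | not φ => exact BStep.neg φ e s b m
  | and φ ψ =>
      by_cases hc : FOSat M s (approx m e b φ) <;> simp only [bmove, hc, if_true, if_false]
      · exact BStep.andRight φ ψ e s b m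
      · exact BStep.andLeft φ ψ e s b m
  | or φ ψ =>
      by_cases hc : FOSat M s (approx m e b φ) <;> simp only [bmove, hc, if_true, if_false]
      · exact BStep.orLeft φ ψ e s b m
      · exact BStep.orRight φ ψ e s b m
  | ex x φ =>
      by_cases hc : ∃ a, FOSat M (Function.update s x a) (approx m e b φ) <;>
        simp only [bmove, hc, dif_pos, dif_neg, not_false_iff] <;>
        exact BStep.exStep x φ e s b m _
  | all x φ =>
      by_cases hc : ∃ a, ¬ FOSat M (Function.update s x a) (approx m e b φ) <;>
        simp only [bmove, hc, dif_pos, dif_neg, not_false_iff] <;>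
        exact BStep.allStep x φ e s b m _
  | lab L φ => exact BStep.labStep L φ e s b m
  | claim L =>
      rcases hex with ⟨z, hz⟩
      cases hz with
      | claimStep L e s b χ n hL =>
          simp only [bmove, hL]
          exact BStep.claimStep L e s b χ n hL

end Aux

/-! ## Direction A: approximant truth implies a winning strategy in `G_ω` -/

section Omega

variable {V : Vocab} (M : Struct.{u} V) (φ : SCLFormula V) (s : ℕ → M.Dom)

/-- Eloise's canonical move in `G_ω`. -/
noncomputable def omove (n0 : ℕ) : GOPos V M.Dom → GOPos V M.Dom
  | .start => .mid 0
  | .mid n' => .inner (initPos φ s) (max n' n0)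
  | .inner p m => .inner (bmove M (p, m)).1 (bmove M (p, m)).2

/-- Eloise's canonical strategy in `G_ω`. -/
noncomputable def ostrat (n0 : ℕ) : List (GOPos V M.Dom) → GOPos V M.Dom :=
  fun w =>
    match w.getLast? with
    | some u => omove M φ s n0 u
    | none => .start

/-- The invariant on positions of `G_ω`. -/
def JPos : GOPos V M.Dom → Prop
  | .inner p m => IPos M (p, m)
  | _ => True

theorem ostep_inner_inv {p : SCLPos V M.Dom} {m : ℕ} {z : GOPos V M.Dom}
    (h : GOStep M φ s (.inner p m) z) :
    ∃ q k, z = .inner q k ∧ BStep M (p, m) (q, k) := by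
  cases h with
  | play p q m k hb => exact ⟨q, k, rfl, hb⟩

theorem walkJ (n0 : ℕ) (hn0 : Pol M n0 (fun _ => none) true φ s) :
    ∀ w, (gameOmega M φ s).IsWalkFrom .start w →
      (gameOmega M φ s).FollowsFin .eloise (ostrat M φ s n0) w →
      ∀ u, w.getLast? = some u → JPos M u := by
  intro w
  induction w using List.reverseRecOn with
  | nil => intro _ _ u hu; simp at hu
  | append_singleton w x ih =>
      intro hw hf u hu
      rw [List.getLast?_concat] at hu
      injection hu with hu
      subst hu
      cases hwn : w.getLast? with
      | none =>
          rw [List.getLast?_eq_none_iff] at hwn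
          subst hwn
          have hx0 : x = GOPos.start := by simpa using hw.1
          subst hx0
          trivial
      | some u' =>
          have hne : w ≠ [] := by rintro rfl; simp at hwn
          have hwalk : (gameOmega M φ s).IsWalkFrom .start w := by
            refine ⟨?_, (List.isChain_append.mp hw.2).1⟩
            cases w with
            | nil => exact absurd rfl hne
            | cons a t => simpa using hw.1
          have hfw : (gameOmega M φ s).FollowsFin .eloise (ostrat M φ s n0) w :=
            follows_prefix _ hf (List.prefix_append w [x])
          have hJ : JPos M u' := ih hwalk hfw u' hwn
          have hedge : GOStep M φ s u' x := by
            have := (List.isChain_append.mp hw.2).2.2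
            exact this u' (by rw [hwn]; rfl) x rfl
          cases u' with
          | start =>
              cases hedge with
              | abelardPick n' => trivial
          | mid n' =>
              have hx : x = ostrat M φ s n0 w :=
                hf w (.mid n') x (List.prefix_refl _) hwn rfl
              rw [ostrat, hwn] at hx
              subst hx
              show IPos M (initPos φ s, max n' n0)
              exact pol_mono M n0 (max n' n0) (le_max_right _ _) φ _ true s hn0
          | inner p m =>
              rcases ostep_inner_inv M φ s hedge with ⟨q, k, rfl, hb⟩
              cases ht : posTurn p with
              | abelard => exact I_step_abelard M hJ hb ht
              | eloise =>
                  have hx : GOPos.inner q k = ostrat M φ s n0 w :=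
                    hf w (.inner p m) _ (List.prefix_refl _) hwn ht
                  rw [ostrat, hwn] at hx
                  have hna : ¬ p.form.IsFOAtom := by
                    intro hat
                    rcases p with ⟨ψ, e, s', b⟩
                    exact bstep_atom M hat hb
                  have hbm := I_bmove M hJ hna
                  have : GOPos.inner q k = .inner (bmove M (p, m)).1 (bmove M (p, m)).2 := hx
                  simp only [GOPos.inner.injEq] at this
                  show IPos M (q, k)
                  rw [this.1, this.2]
                  exact hbm.2

theorem dirA (n0 : ℕ) (h : FOSat M s (approximant φ n0)) : BndTrue M s φ := by
  have hn0 : Pol M n0 (fun _ => none) true φ s := by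
    rw [pol_true]; exact h
  refine ⟨ostrat M φ s n0, ?_, ?_, ?_⟩
  · -- legality
    intro w u hw hu ht hex
    cases u with
    | start => simp [gameOmega, goTurn] at ht
    | mid n' =>
        show GOStep M φ s _ _
        rw [ostrat, hu]
        exact GOStep.eloisePick n' (max n' n0) (le_max_left _ _)
    | inner p m =>
        show GOStep M φ s _ _
        rw [ostrat, hu]
        rcases hex with ⟨z, hz⟩
        rcases ostep_inner_inv M φ s hz with ⟨q, k, rfl, hb⟩
        exact GOStep.play p _ m _ (bmove_edge M ⟨_, hb⟩)
  · -- finite plays are won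
    intro w hfp hf
    have hne : w ≠ [] := by
      rintro rfl
      simpa using hfp.1.1
    obtain ⟨u, hu⟩ : ∃ u, w.getLast? = some u := by
      cases h : w.getLast? with
      | none => exact absurd (List.getLast?_eq_none_iff.mp h) hne
      | some u => exact ⟨u, rfl⟩
    have hJ : JPos M u := walkJ M φ s n0 hn0 w hfp.1 hf u hu
    have hdead : (gameOmega M φ s).DeadEnd u := hfp.2 u hu
    refine ⟨u, hu, ?_⟩
    cases u with
    | start => exact absurd (GOStep.abelardPick 0) (hdead _)
    | mid n' => exact absurd (GOStep.eloisePick n' n' le_rfl) (hdead _)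
    | inner p m =>
        show posWin M p .eloise
        have : ∀ z, ¬ BStep M (p, m) z := by
          rintro ⟨q, k⟩ hz
          exact hdead _ (GOStep.play p q m k hz)
        exact I_deadend M hJ this
  · -- no infinite plays
    intro f hf _
    have hacc : ∀ pm : SCLPos V M.Dom × ℕ, Acc (fun a c => BStep M c a) pm := by
      rintro ⟨⟨ψ, e, s', b⟩, m⟩
      exact bstep_acc M m ψ e s' b
    have key : ∀ (pm : SCLPos V M.Dom × ℕ) (g : ℕ → GOPos V M.Dom),
        g 0 = .inner pm.1 pm.2 → (∀ n, GOStep M φ s (g n) (g (n + 1))) → False := by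
      intro pm
      induction hacc pm with
      | intro x hx ih =>
          intro g hg hstep
          have h0 := hstep 0
          rw [hg] at h0
          rcases ostep_inner_inv M φ s h0 with ⟨q, k, hg1, hb⟩
          exact ih (q, k) hb (fun n => g (n + 1)) hg1 (fun n => hstep (n + 1))
    rcases hf with ⟨h0, hstep⟩
    have h1 := hstep 0
    rw [h0] at h1
    obtain ⟨n', h1'⟩ : ∃ n', f 1 = .mid n' := by
      generalize hz : f 1 = z at h1
      cases h1; exact ⟨_, rfl⟩
    have h2 := hstep 1
    rw [h1'] at h2
    obtain ⟨n, h2'⟩ : ∃ n, f 2 = .inner (initPos φ s) n := by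
      generalize hz : f 2 = z at h2
      cases h2; exact ⟨_, rfl⟩
    exact key (initPos φ s, n) (fun k => f (k + 2)) h2' (fun k => hstep (k + 2))

theorem extract (σ : List (GOPos V M.Dom) → GOPos V M.Dom)
    (hws : (gameOmega M φ s).WinningStrategy .eloise .start σ) :
    ∀ (m : ℕ) (ψ : SCLFormula V) (e : ℕ → Option (SCLFormula V)) (s' : ℕ → M.Dom) (b : Bool)
      (w : List (GOPos V M.Dom)),
      (gameOmega M φ s).IsWalkFrom .start w →
      (gameOmega M φ s).FollowsFin .eloise σ w →
      w.getLast? = some (.inner ⟨ψ, e, s', b⟩ m) → Pol M m e b ψ s' := by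
  obtain ⟨hleg, hwin, _⟩ := hws
  have hdead : ∀ (p : SCLPos V M.Dom) (m : ℕ) (w : List (GOPos V M.Dom)),
      (gameOmega M φ s).IsWalkFrom .start w → (gameOmega M φ s).FollowsFin .eloise σ w →
      w.getLast? = some (.inner p m) → (∀ z, ¬ BStep M (p, m) z) → posWin M p .eloise := by
    intro p m w hw hf hl hnb
    have hfp : (gameOmega M φ s).IsFinitePlay .start w := by
      refine ⟨hw, ?_⟩
      intro u hu
      rw [hl] at hu
      injection hu with hu
      subst hu
      intro z hz
      rcases ostep_inner_inv M φ s hz with ⟨q, k, rfl, hb⟩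
      exact hnb _ hb
    rcases hwin w hfp hf with ⟨u, hu, hwinu⟩
    rw [hl] at hu
    injection hu with hu
    subst hu
    exact hwinu
  have hmove : ∀ (p : SCLPos V M.Dom) (m : ℕ) (w : List (GOPos V M.Dom)),
      (gameOmega M φ s).IsWalkFrom .start w → (gameOmega M φ s).FollowsFin .eloise σ w →
      w.getLast? = some (.inner p m) → posTurn p = .eloise → (∃ z, BStep M (p, m) z) →
      ∃ q k, BStep M (p, m) (q, k) ∧
        (gameOmega M φ s).IsWalkFrom .start (w ++ [.inner q k]) ∧
        (gameOmega M φ s).FollowsFin .eloise σ (w ++ [.inner q k]) ∧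
        (w ++ [GOPos.inner q k]).getLast? = some (.inner q k) := by
    rintro p m w hw hf hl ht ⟨z, hz⟩
    have hσ : GOStep M φ s (.inner p m) (σ w) :=
      hleg w _ hw hl ht ⟨_, GOStep.play _ _ _ _ hz⟩
    rcases ostep_inner_inv M φ s hσ with ⟨q, k, hσ', hb⟩
    exact ⟨q, k, hb, walk_snoc _ hw hl (hσ' ▸ hσ),
      follows_snoc _ hf hl (fun _ => hσ'.symm), by simp⟩
  have habext : ∀ (p : SCLPos V M.Dom) (m : ℕ) (w : List (GOPos V M.Dom))
      (q : SCLPos V M.Dom) (k : ℕ),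
      (gameOmega M φ s).IsWalkFrom .start w → (gameOmega M φ s).FollowsFin .eloise σ w →
      w.getLast? = some (.inner p m) → posTurn p = .abelard → BStep M (p, m) (q, k) →
      (gameOmega M φ s).IsWalkFrom .start (w ++ [.inner q k]) ∧
        (gameOmega M φ s).FollowsFin .eloise σ (w ++ [.inner q k]) ∧
        (w ++ [GOPos.inner q k]).getLast? = some (.inner q k) := by
    intro p m w q k hw hf hl ht hb
    exact ⟨walk_snoc _ hw hl (GOStep.play _ _ _ _ hb),
      follows_snoc _ hf hl (fun ht' => nomatch ht.symm.trans ht'), by simp⟩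
  intro m
  induction m with
  | zero =>
      intro ψ
      induction ψ with
      | bot =>
          intro e s' b w hw hf hl
          have hpw := hdead _ _ w hw hf hl (fun z hz => bstep_atom M (by trivial) hz)
          exact (pol_atom M _ e b _ s' (by trivial)).mpr hpw.2
      | eq x y =>
          intro e s' b w hw hf hl
          have hpw := hdead _ _ w hw hf hl (fun z hz => bstep_atom M (by trivial) hz)
          exact (pol_atom M _ e b _ s' (by trivial)).mpr hpw.2
      | rel R a =>
          intro e s' b w hw hf hl
          have hpw := hdead _ _ w hw hf hl (fun z hz => bstep_atom M (by trivial) hz)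
          exact (pol_atom M _ e b _ s' (by trivial)).mpr hpw.2
      | claim L =>
          intro e s' b w hw hf hl
          have hpw := hdead _ _ w hw hf hl (fun z hz => by cases hz)
          exact hpw.1.elim
      | not χ ih =>
          intro e s' b w hw hf hl
          obtain ⟨q, k, hb, hw', hf', hl'⟩ :=
            hmove _ _ w hw hf hl rfl ⟨_, BStep.neg χ e s' b 0⟩
          cases hb
          exact (pol_not M 0 e b χ s').mpr (ih e s' (!b) _ hw' hf' hl')
      | and χ₁ χ₂ ih1 ih2 =>
          intro e s' b w hw hf hl
          cases b with
          | true =>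
              obtain ⟨hw1, hf1, hl1⟩ := habext _ _ w _ _ hw hf hl rfl (BStep.andLeft χ₁ χ₂ e s' true 0)
              obtain ⟨hw2, hf2, hl2⟩ := habext _ _ w _ _ hw hf hl rfl (BStep.andRight χ₁ χ₂ e s' true 0)
              exact (pol_and_true M 0 e χ₁ χ₂ s').mpr
                ⟨ih1 e s' true _ hw1 hf1 hl1, ih2 e s' true _ hw2 hf2 hl2⟩
          | false =>
              obtain ⟨q, k, hb, hw', hf', hl'⟩ :=
                hmove _ _ w hw hf hl rfl ⟨_, BStep.andLeft χ₁ χ₂ e s' false 0⟩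
              cases hb with
              | andLeft => exact (pol_and_false M 0 e χ₁ χ₂ s').mpr (Or.inl (ih1 e s' false _ hw' hf' hl'))
              | andRight => exact (pol_and_false M 0 e χ₁ χ₂ s').mpr (Or.inr (ih2 e s' false _ hw' hf' hl'))
      | or χ₁ χ₂ ih1 ih2 =>
          intro e s' b w hw hf hl
          cases b with
          | false =>
              obtain ⟨hw1, hf1, hl1⟩ := habext _ _ w _ _ hw hf hl rfl (BStep.orLeft χ₁ χ₂ e s' false 0)
              obtain ⟨hw2, hf2, hl2⟩ := habext _ _ w _ _ hw hf hl rfl (BStep.orRight χ₁ χ₂ e s' false 0)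
              exact (pol_or_false M 0 e χ₁ χ₂ s').mpr
                ⟨ih1 e s' false _ hw1 hf1 hl1, ih2 e s' false _ hw2 hf2 hl2⟩
          | true =>
              obtain ⟨q, k, hb, hw', hf', hl'⟩ :=
                hmove _ _ w hw hf hl rfl ⟨_, BStep.orLeft χ₁ χ₂ e s' true 0⟩
              cases hb with
              | orLeft => exact (pol_or_true M 0 e χ₁ χ₂ s').mpr (Or.inl (ih1 e s' true _ hw' hf' hl'))
              | orRight => exact (pol_or_true M 0 e χ₁ χ₂ s').mpr (Or.inr (ih2 e s' true _ hw' hf' hl'))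
      | ex x χ ih =>
          intro e s' b w hw hf hl
          cases b with
          | true =>
              obtain ⟨q, k, hb, hw', hf', hl'⟩ :=
                hmove _ _ w hw hf hl rfl
                  ⟨_, BStep.exStep x χ e s' true 0 (Classical.arbitrary M.Dom)⟩
              cases hb with
              | exStep _ _ _ _ _ _ a =>
                  exact (pol_ex_true M 0 e x χ s').mpr ⟨a, ih e _ true _ hw' hf' hl'⟩
          | false =>
              refine (pol_ex_false M 0 e x χ s').mpr fun a => ?_
              obtain ⟨hw1, hf1, hl1⟩ := habext _ _ w _ _ hw hf hl rfl (BStep.exStep x χ e s' false 0 a)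
              exact ih e _ false _ hw1 hf1 hl1
      | all x χ ih =>
          intro e s' b w hw hf hl
          cases b with
          | false =>
              obtain ⟨q, k, hb, hw', hf', hl'⟩ :=
                hmove _ _ w hw hf hl rfl
                  ⟨_, BStep.allStep x χ e s' false 0 (Classical.arbitrary M.Dom)⟩
              cases hb with
              | allStep _ _ _ _ _ _ a =>
                  exact (pol_all_false M 0 e x χ s').mpr ⟨a, ih e _ false _ hw' hf' hl'⟩
          | true =>
              refine (pol_all_true M 0 e x χ s').mpr fun a => ?_
              obtain ⟨hw1, hf1, hl1⟩ := habext _ _ w _ _ hw hf hl rfl (BStep.allStep x χ e s' true 0 a)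
              exact ih e _ true _ hw1 hf1 hl1
      | lab L χ ih =>
          intro e s' b w hw hf hl
          obtain ⟨q, k, hb, hw', hf', hl'⟩ :=
            hmove _ _ w hw hf hl rfl ⟨_, BStep.labStep L χ e s' b 0⟩
          cases hb
          exact (pol_lab M 0 e b L χ s').mpr (ih _ s' b _ hw' hf' hl')
  | succ m ihm =>
      intro ψ
      induction ψ with
      | bot =>
          intro e s' b w hw hf hl
          have hpw := hdead _ _ w hw hf hl (fun z hz => bstep_atom M (by trivial) hz)
          exact (pol_atom M _ e b _ s' (by trivial)).mpr hpw.2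
      | eq x y =>
          intro e s' b w hw hf hl
          have hpw := hdead _ _ w hw hf hl (fun z hz => bstep_atom M (by trivial) hz)
          exact (pol_atom M _ e b _ s' (by trivial)).mpr hpw.2
      | rel R a =>
          intro e s' b w hw hf hl
          have hpw := hdead _ _ w hw hf hl (fun z hz => bstep_atom M (by trivial) hz)
          exact (pol_atom M _ e b _ s' (by trivial)).mpr hpw.2
      | claim L =>
          intro e s' b w hw hf hl
          cases hL : e L with
          | none =>
              have hpw := hdead _ _ w hw hf hl (fun z hz => by
                cases hz with
                | claimStep _ _ _ _ χ _ hL' => rw [hL] at hL'; cases hL')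
              exact hpw.1.elim
          | some χ =>
              obtain ⟨q, k, hb, hw', hf', hl'⟩ :=
                hmove _ _ w hw hf hl rfl ⟨_, BStep.claimStep L e s' b χ m hL⟩
              cases hb with
              | claimStep _ _ _ _ χ' _ hL' =>
                  exact (pol_claim_some M m e b L s' χ' hL').mpr (ihm χ' e s' b _ hw' hf' hl')
      | not χ ih =>
          intro e s' b w hw hf hl
          obtain ⟨q, k, hb, hw', hf', hl'⟩ :=
            hmove _ _ w hw hf hl rfl ⟨_, BStep.neg χ e s' b (m + 1)⟩
          cases hb
          exact (pol_not M (m + 1) e b χ s').mpr (ih e s' (!b) _ hw' hf' hl')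
      | and χ₁ χ₂ ih1 ih2 =>
          intro e s' b w hw hf hl
          cases b with
          | true =>
              obtain ⟨hw1, hf1, hl1⟩ := habext _ _ w _ _ hw hf hl rfl (BStep.andLeft χ₁ χ₂ e s' true (m + 1))
              obtain ⟨hw2, hf2, hl2⟩ := habext _ _ w _ _ hw hf hl rfl (BStep.andRight χ₁ χ₂ e s' true (m + 1))
              exact (pol_and_true M (m + 1) e χ₁ χ₂ s').mpr
                ⟨ih1 e s' true _ hw1 hf1 hl1, ih2 e s' true _ hw2 hf2 hl2⟩
          | false =>
              obtain ⟨q, k, hb, hw', hf', hl'⟩ :=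
                hmove _ _ w hw hf hl rfl ⟨_, BStep.andLeft χ₁ χ₂ e s' false (m + 1)⟩
              cases hb with
              | andLeft => exact (pol_and_false M (m + 1) e χ₁ χ₂ s').mpr (Or.inl (ih1 e s' false _ hw' hf' hl'))
              | andRight => exact (pol_and_false M (m + 1) e χ₁ χ₂ s').mpr (Or.inr (ih2 e s' false _ hw' hf' hl'))
      | or χ₁ χ₂ ih1 ih2 =>
          intro e s' b w hw hf hl
          cases b with
          | false =>
              obtain ⟨hw1, hf1, hl1⟩ := habext _ _ w _ _ hw hf hl rfl (BStep.orLeft χ₁ χ₂ e s' false (m + 1))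
              obtain ⟨hw2, hf2, hl2⟩ := habext _ _ w _ _ hw hf hl rfl (BStep.orRight χ₁ χ₂ e s' false (m + 1))
              exact (pol_or_false M (m + 1) e χ₁ χ₂ s').mpr
                ⟨ih1 e s' false _ hw1 hf1 hl1, ih2 e s' false _ hw2 hf2 hl2⟩
          | true =>
              obtain ⟨q, k, hb, hw', hf', hl'⟩ :=
                hmove _ _ w hw hf hl rfl ⟨_, BStep.orLeft χ₁ χ₂ e s' true (m + 1)⟩
              cases hb with
              | orLeft => exact (pol_or_true M (m + 1) e χ₁ χ₂ s').mpr (Or.inl (ih1 e s' true _ hw' hf' hl'))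
              | orRight => exact (pol_or_true M (m + 1) e χ₁ χ₂ s').mpr (Or.inr (ih2 e s' true _ hw' hf' hl'))
      | ex x χ ih =>
          intro e s' b w hw hf hl
          cases b with
          | true =>
              obtain ⟨q, k, hb, hw', hf', hl'⟩ :=
                hmove _ _ w hw hf hl rfl
                  ⟨_, BStep.exStep x χ e s' true (m + 1) (Classical.arbitrary M.Dom)⟩
              cases hb with
              | exStep _ _ _ _ _ _ a =>
                  exact (pol_ex_true M (m + 1) e x χ s').mpr ⟨a, ih e _ true _ hw' hf' hl'⟩
          | false =>
              refine (pol_ex_false M (m + 1) e x χ s').mpr fun a => ?_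
              obtain ⟨hw1, hf1, hl1⟩ := habext _ _ w _ _ hw hf hl rfl (BStep.exStep x χ e s' false (m + 1) a)
              exact ih e _ false _ hw1 hf1 hl1
      | all x χ ih =>
          intro e s' b w hw hf hl
          cases b with
          | false =>
              obtain ⟨q, k, hb, hw', hf', hl'⟩ :=
                hmove _ _ w hw hf hl rfl
                  ⟨_, BStep.allStep x χ e s' false (m + 1) (Classical.arbitrary M.Dom)⟩
              cases hb with
              | allStep _ _ _ _ _ _ a =>
                  exact (pol_all_false M (m + 1) e x χ s').mpr ⟨a, ih e _ false _ hw' hf' hl'⟩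
          | true =>
              refine (pol_all_true M (m + 1) e x χ s').mpr fun a => ?_
              obtain ⟨hw1, hf1, hl1⟩ := habext _ _ w _ _ hw hf hl rfl (BStep.allStep x χ e s' true (m + 1) a)
              exact ih e _ true _ hw1 hf1 hl1
      | lab L χ ih =>
          intro e s' b w hw hf hl
          obtain ⟨q, k, hb, hw', hf', hl'⟩ :=
            hmove _ _ w hw hf hl rfl ⟨_, BStep.labStep L χ e s' b (m + 1)⟩
          cases hb
          exact (pol_lab M (m + 1) e b L χ s').mpr (ih _ s' b _ hw' hf' hl')

theorem dirB (h : BndTrue M s φ) : ∃ n, FOSat M s (approximant φ n) := by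
  rcases h with ⟨σ, hws⟩
  have hleg := hws.1
  have hw0 : (gameOmega M φ s).IsWalkFrom .start [.start] := ⟨rfl, List.isChain_singleton _⟩
  have hf0 : (gameOmega M φ s).FollowsFin .eloise σ [.start] := by
    intro q u x hpre hq ht
    have hq0 : q = [] := by
      have hle := hpre.length_le
      simp only [List.length_append, List.length_cons, List.length_nil] at hle
      exact List.eq_nil_of_length_eq_zero (by omega)
    subst hq0
    simp at hq
  have hedge0 : GOStep M φ s .start (.mid 0) := GOStep.abelardPick 0
  have hw1 := walk_snoc _ hw0 rfl hedge0
  have hab : (gameOmega M φ s).turn GOPos.start = Player.abelard := rfl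
  have hf1 := follows_snoc (gameOmega M φ s) (x := GOPos.mid 0) (u := GOPos.start) hf0 rfl
    (fun ht => nomatch hab.symm.trans ht)
  have hl1 : ([GOPos.start] ++ [(GOPos.mid 0 : GOPos V M.Dom)]).getLast? = some (.mid 0) := by
    simp
  have hσ : GOStep M φ s (.mid 0) (σ ([GOPos.start] ++ [GOPos.mid 0])) :=
    hleg _ _ hw1 hl1 rfl ⟨_, GOStep.eloisePick 0 0 le_rfl⟩
  obtain ⟨n, hn⟩ : ∃ n, σ ([GOPos.start] ++ [GOPos.mid 0]) = .inner (initPos φ s) n := by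
    generalize hz : σ ([GOPos.start] ++ [GOPos.mid 0]) = z at hσ
    cases hσ; exact ⟨_, rfl⟩
  have hw2 := walk_snoc _ hw1 hl1 (hn ▸ hσ)
  have hf2 := follows_snoc (gameOmega M φ s) hf1 hl1 (fun _ => hn.symm)
  refine ⟨n, ?_⟩
  have := extract M φ s σ hws n φ (fun _ => none) s true _ hw2 hf2 (by simp [initPos])
  exact (pol_true M n _ φ s).mp this

end Omega



/-! ## Syntactic properties of approximants -/

section Approx

variable {V : Vocab}

theorem isFO_approx : ∀ (n : ℕ) (ψ : SCLFormula V) (e : ℕ → Option (SCLFormula V)) (b : Bool),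
    (approx n e b ψ).IsFO := by
  intro n
  induction n with
  | zero =>
      intro ψ
      induction ψ with
      | bot => intro e b; rw [approx_bot]; trivial
      | eq x y => intro e b; rw [approx_eq]; trivial
      | rel R a => intro e b; rw [approx_rel]; trivial
      | claim L => intro e b; rw [approx_claim_zero]; cases b <;> trivial
      | not χ ih => intro e b; rw [approx_not]; exact ih e (!b)
      | and χ₁ χ₂ ih1 ih2 => intro e b; rw [approx_and]; exact ⟨ih1 e b, ih2 e b⟩
      | or χ₁ χ₂ ih1 ih2 => intro e b; rw [approx_or]; exact ⟨ih1 e b, ih2 e b⟩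
      | ex x χ ih => intro e b; rw [approx_ex]; exact ih e b
      | all x χ ih => intro e b; rw [approx_all]; exact ih e b
      | lab L χ ih => intro e b; rw [approx_lab]; exact ih _ b
  | succ n ihn =>
      intro ψ
      induction ψ with
      | bot => intro e b; rw [approx_bot]; trivial
      | eq x y => intro e b; rw [approx_eq]; trivial
      | rel R a => intro e b; rw [approx_rel]; trivial
      | claim L =>
          intro e b
          rw [approx_claim_succ]
          cases hL : e L with
          | none => cases b <;> trivial
          | some χ => exact ihn χ e b
      | not χ ih => intro e b; rw [approx_not]; exact ih e (!b)
      | and χ₁ χ₂ ih1 ih2 => intro e b; rw [approx_and]; exact ⟨ih1 e b, ih2 e b⟩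
      | or χ₁ χ₂ ih1 ih2 => intro e b; rw [approx_or]; exact ⟨ih1 e b, ih2 e b⟩
      | ex x χ ih => intro e b; rw [approx_ex]; exact ih e b
      | all x χ ih => intro e b; rw [approx_all]; exact ih e b
      | lab L χ ih => intro e b; rw [approx_lab]; exact ih _ b

theorem freeVars_approx : ∀ (n : ℕ) (ψ : SCLFormula V) (e : ℕ → Option (SCLFormula V)) (b : Bool)
    (U : Set ℕ), (∀ L χ, e L = some χ → ∀ z ∈ χ.freeVars, z ∈ U) →
    (∀ z ∈ ψ.freeVars, z ∈ U) → ∀ z ∈ (approx n e b ψ).freeVars, z ∈ U := by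
  have hbase : ∀ (b : Bool) (z : ℕ),
      z ∈ ((if b then SCLFormula.bot else .not .bot) : SCLFormula V).freeVars → False := by
    intro b z hz; cases b <;> simp [SCLFormula.freeVars] at hz
  intro n
  induction n with
  | zero =>
      intro ψ
      induction ψ with
      | bot => intro e b U _ hfv; rw [approx_bot]; exact hfv
      | eq x y => intro e b U _ hfv; rw [approx_eq]; exact hfv
      | rel R a => intro e b U _ hfv; rw [approx_rel]; exact hfv
      | claim L =>
          intro e b U _ _ z hz
          rw [approx_claim_zero] at hz
          exact absurd hz (fun h => hbase b z h)
      | not χ ih =>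
          intro e b U henv hfv z hz
          rw [approx_not] at hz
          exact ih e (!b) U henv hfv z hz
      | and χ₁ χ₂ ih1 ih2 =>
          intro e b U henv hfv z hz
          rw [approx_and] at hz
          simp only [SCLFormula.freeVars, Finset.mem_union] at hz hfv
          rcases hz with hz | hz
          · exact ih1 e b U henv (fun z hz => hfv z (Or.inl hz)) z hz
          · exact ih2 e b U henv (fun z hz => hfv z (Or.inr hz)) z hz
      | or χ₁ χ₂ ih1 ih2 =>
          intro e b U henv hfv z hz
          rw [approx_or] at hz
          simp only [SCLFormula.freeVars, Finset.mem_union] at hz hfv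
          rcases hz with hz | hz
          · exact ih1 e b U henv (fun z hz => hfv z (Or.inl hz)) z hz
          · exact ih2 e b U henv (fun z hz => hfv z (Or.inr hz)) z hz
      | ex x χ ih =>
          intro e b U henv hfv z hz
          rw [approx_ex] at hz
          simp only [SCLFormula.freeVars, Finset.mem_sdiff, Finset.mem_singleton] at hz hfv
          rcases hz with ⟨hz, hzx⟩
          have := ih e b (U ∪ {x}) (fun L χ hL z hzχ => Or.inl (henv L χ hL z hzχ))
            (fun z hzχ => by
              by_cases hx : z = x
              · exact Or.inr hx
              · exact Or.inl (hfv z ⟨hzχ, hx⟩)) z hz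
          rcases this with h | h
          · exact h
          · exact absurd h hzx
      | all x χ ih =>
          intro e b U henv hfv z hz
          rw [approx_all] at hz
          simp only [SCLFormula.freeVars, Finset.mem_sdiff, Finset.mem_singleton] at hz hfv
          rcases hz with ⟨hz, hzx⟩
          have := ih e b (U ∪ {x}) (fun L χ hL z hzχ => Or.inl (henv L χ hL z hzχ))
            (fun z hzχ => by
              by_cases hx : z = x
              · exact Or.inr hx
              · exact Or.inl (hfv z ⟨hzχ, hx⟩)) z hz
          rcases this with h | h
          · exact h
          · exact absurd h hzx
      | lab L χ ih =>
          intro e b U henv hfv z hz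
          rw [approx_lab] at hz
          refine ih _ b U ?_ hfv z hz
          intro L' χ' hL'
          by_cases hLL : L' = L
          · subst hLL
            rw [Function.update_self] at hL'
            injection hL' with hL'
            subst hL'
            exact hfv
          · rw [Function.update_of_ne hLL] at hL'
            exact henv L' χ' hL'
  | succ n ihn =>
      intro ψ
      induction ψ with
      | bot => intro e b U _ hfv; rw [approx_bot]; exact hfv
      | eq x y => intro e b U _ hfv; rw [approx_eq]; exact hfv
      | rel R a => intro e b U _ hfv; rw [approx_rel]; exact hfv
      | claim L =>
          intro e b U henv _ z hz
          rw [approx_claim_succ] at hz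
          cases hL : e L with
          | none =>
              rw [hL] at hz
              exact absurd hz (fun h => hbase b z h)
          | some χ =>
              rw [hL] at hz
              exact ihn χ e b U henv (henv L χ hL) z hz
      | not χ ih =>
          intro e b U henv hfv z hz
          rw [approx_not] at hz
          exact ih e (!b) U henv hfv z hz
      | and χ₁ χ₂ ih1 ih2 =>
          intro e b U henv hfv z hz
          rw [approx_and] at hz
          simp only [SCLFormula.freeVars, Finset.mem_union] at hz hfv
          rcases hz with hz | hz
          · exact ih1 e b U henv (fun z hz => hfv z (Or.inl hz)) z hz
          · exact ih2 e b U henv (fun z hz => hfv z (Or.inr hz)) z hz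
      | or χ₁ χ₂ ih1 ih2 =>
          intro e b U henv hfv z hz
          rw [approx_or] at hz
          simp only [SCLFormula.freeVars, Finset.mem_union] at hz hfv
          rcases hz with hz | hz
          · exact ih1 e b U henv (fun z hz => hfv z (Or.inl hz)) z hz
          · exact ih2 e b U henv (fun z hz => hfv z (Or.inr hz)) z hz
      | ex x χ ih =>
          intro e b U henv hfv z hz
          rw [approx_ex] at hz
          simp only [SCLFormula.freeVars, Finset.mem_sdiff, Finset.mem_singleton] at hz hfv
          rcases hz with ⟨hz, hzx⟩
          have := ih e b (U ∪ {x}) (fun L χ hL z hzχ => Or.inl (henv L χ hL z hzχ))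
            (fun z hzχ => by
              by_cases hx : z = x
              · exact Or.inr hx
              · exact Or.inl (hfv z ⟨hzχ, hx⟩)) z hz
          rcases this with h | h
          · exact h
          · exact absurd h hzx
      | all x χ ih =>
          intro e b U henv hfv z hz
          rw [approx_all] at hz
          simp only [SCLFormula.freeVars, Finset.mem_sdiff, Finset.mem_singleton] at hz hfv
          rcases hz with ⟨hz, hzx⟩
          have := ih e b (U ∪ {x}) (fun L χ hL z hzχ => Or.inl (henv L χ hL z hzχ))
            (fun z hzχ => by
              by_cases hx : z = x
              · exact Or.inr hx
              · exact Or.inl (hfv z ⟨hzχ, hx⟩)) z hz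
          rcases this with h | h
          · exact h
          · exact absurd h hzx
      | lab L χ ih =>
          intro e b U henv hfv z hz
          rw [approx_lab] at hz
          refine ih _ b U ?_ hfv z hz
          intro L' χ' hL'
          by_cases hLL : L' = L
          · subst hLL
            rw [Function.update_self] at hL'
            injection hL' with hL'
            subst hL'
            exact hfv
          · rw [Function.update_of_ne hLL] at hL'
            exact henv L' χ' hL'

theorem freeVars_approximant (φ : SCLFormula V) (n : ℕ) (h : φ.freeVars = ∅) :
    (approximant φ n).freeVars = ∅ := by
  refine Finset.eq_empty_iff_forall_notMem.mpr fun z hz => ?_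
  have := freeVars_approx n φ (fun _ => none) true (∅ : Set ℕ)
    (fun L χ hL => by cases hL) (fun z hz => by rw [h] at hz; cases hz) z hz
  exact this

end Approx

/-! ## Basic facts about `𝔊₁` and `𝔊₂` -/

theorem edge_G1 (a b : (G1.{u}).Dom) : Edge G1 a b ↔ adjZ a.down b.down := by
  constructor <;> intro h <;> exact h

theorem edge_G2 (a b : (G2.{u}).Dom) :
    Edge G2 a b ↔ (a.2 = b.2 ∧ adjZ a.1.down b.1.down) := by
  constructor <;> intro h <;> exact h

theorem isGraph_G1 : IsGraph G1.{u} := by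
  intro a b h
  rw [edge_G1] at h ⊢
  exact h.symm

theorem isGraph_G2 : IsGraph G2.{u} := by
  intro a b h
  rw [edge_G2] at h ⊢
  exact ⟨h.1.symm, h.2.symm⟩

theorem g1_connected : GraphConnected G1.{u} := by
  intro a c hne
  obtain ⟨av⟩ := a
  obtain ⟨cv⟩ := c
  rcases le_or_gt av cv with hle | hlt
  · refine ⟨(cv - av).toNat, fun i => ⟨av + i⟩, by show ULift.up (av + ((0:ℕ):ℤ)) = ULift.up av; simp, ?_, ?_⟩
    · show ULift.up (av + ((cv - av).toNat : ℤ)) = ULift.up cv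
      rw [Int.toNat_of_nonneg (by omega : (0:ℤ) ≤ cv - av)]
      congr 1
      ring
    · intro i _
      refine (edge_G1 _ _).mpr ?_
      left
      show (av + (i + 1 : ℕ) : ℤ) = av + i + 1
      push_cast
      ring
  · refine ⟨(av - cv).toNat, fun i => ⟨av - i⟩, by show ULift.up (av - ((0:ℕ):ℤ)) = ULift.up av; simp, ?_, ?_⟩
    · show ULift.up (av - ((av - cv).toNat : ℤ)) = ULift.up cv
      rw [Int.toNat_of_nonneg (by omega : (0:ℤ) ≤ av - cv)]
      congr 1
      ring
    · intro i _
      refine (edge_G1 _ _).mpr ?_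
      right
      show (av - i : ℤ) = av - (i + 1 : ℕ) + 1
      push_cast
      ring
theorem g2_not_connected : ¬ GraphConnected G2.{u} := by
  intro h
  rcases h (⟨0⟩, false) (⟨0⟩, true) (fun hc => Bool.noConfusion (congrArg Prod.snd hc)) with ⟨n, f, h0, hn, hstep⟩
  have key : ∀ i, i ≤ n → (f i).2 = false := by
    intro i
    induction i with
    | zero => intro _; rw [h0]
    | succ i ih =>
        intro hle
        have he := hstep i (by omega)
        rw [edge_G2] at he
        rw [← he.1]
        exact ih (by omega)
  have := key n le_rfl
  rw [hn] at this
  simp at this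

/-! ## Elementary equivalence of `𝔊₁` and `𝔊₂` -/

section Transfer

/-- Quantifier rank. -/
def qr {V : Vocab} : SCLFormula V → ℕ
  | .bot => 0
  | .eq _ _ => 0
  | .rel _ _ => 0
  | .claim _ => 0
  | .not φ => qr φ
  | .and φ ψ => max (qr φ) (qr ψ)
  | .or φ ψ => max (qr φ) (qr ψ)
  | .ex _ φ => qr φ + 1
  | .all _ φ => qr φ + 1
  | .lab _ φ => qr φ

def dclampZ (m : ℕ) (d : ℤ) : Option ℤ := if d.natAbs ≤ m then some d else none

def tG1 (m : ℕ) (a b : ULift.{u} ℤ) : Option ℤ := dclampZ m (a.down - b.down)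

def tG2 (m : ℕ) (a b : ULift.{u} ℤ × Bool) : Option ℤ :=
  if a.2 = b.2 then dclampZ m (a.1.down - b.1.down) else none

def Sim (m : ℕ) (vv : Finset ℕ) (s1 : ℕ → ULift.{u} ℤ) (s2 : ℕ → ULift.{u} ℤ × Bool) : Prop :=
  ∀ x ∈ vv, ∀ y ∈ vv, tG1 m (s1 x) (s1 y) = tG2 m (s2 x) (s2 y)

theorem dclampZ_eq_none_iff {m : ℕ} {d : ℤ} : dclampZ m d = none ↔ m < d.natAbs := by
  unfold dclampZ
  split_ifs with h <;> simp <;> omega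

theorem dclampZ_neg (m : ℕ) (d : ℤ) : dclampZ m (-d) = Option.map Neg.neg (dclampZ m d) := by
  unfold dclampZ
  split_ifs with h1 h2 h2 <;> simp_all [Int.natAbs_neg]

theorem tG1_eq_none_iff {m : ℕ} {a b : ULift.{u} ℤ} :
    tG1 m a b = none ↔ m < (a.down - b.down).natAbs := dclampZ_eq_none_iff

theorem tG1_swap (m : ℕ) (a b : ULift.{u} ℤ) :
    tG1 m a b = Option.map Neg.neg (tG1 m b a) := by
  unfold tG1
  rw [show a.down - b.down = -(b.down - a.down) by ring, dclampZ_neg]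

theorem tG2_swap (m : ℕ) (a b : ULift.{u} ℤ × Bool) :
    tG2 m a b = Option.map Neg.neg (tG2 m b a) := by
  unfold tG2
  by_cases hc : a.2 = b.2
  · rw [if_pos hc, if_pos hc.symm,
      show a.1.down - b.1.down = -(b.1.down - a.1.down) by ring, dclampZ_neg]
  · rw [if_neg hc, if_neg (fun h => hc h.symm)]
    rfl

theorem sim_mono {m m' : ℕ} {vv : Finset ℕ} {s1 : ℕ → ULift.{u} ℤ}
    {s2 : ℕ → ULift.{u} ℤ × Bool} (hm : m ≤ m') (h : Sim m' vv s1 s2) : Sim m vv s1 s2 := by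
  intro x hx y hy
  have hp := h x hx y hy
  unfold tG1 tG2 dclampZ at hp ⊢
  by_cases hc : (s2 x).2 = (s2 y).2
  · rw [if_pos hc] at hp ⊢
    by_cases h1 : ((s1 x).down - (s1 y).down).natAbs ≤ m'
    · rw [if_pos h1] at hp
      by_cases h2 : ((s2 x).1.down - (s2 y).1.down).natAbs ≤ m'
      · rw [if_pos h2] at hp
        injection hp with hp
        rw [hp]
      · rw [if_neg h2] at hp
        exact absurd hp (by simp)
    · rw [if_neg h1] at hp
      by_cases h2 : ((s2 x).1.down - (s2 y).1.down).natAbs ≤ m'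
      · rw [if_pos h2] at hp
        exact absurd hp.symm (by simp)
      · rw [if_neg (by omega : ¬ ((s1 x).down - (s1 y).down).natAbs ≤ m),
          if_neg (by omega : ¬ ((s2 x).1.down - (s2 y).1.down).natAbs ≤ m)]
  · rw [if_neg hc] at hp ⊢
    have h1 : ¬ ((s1 x).down - (s1 y).down).natAbs ≤ m' := by
      by_contra h1
      rw [if_pos h1] at hp
      cases hp
    rw [if_neg (by omega : ¬ ((s1 x).down - (s1 y).down).natAbs ≤ m)]

theorem forth (m : ℕ) (vv : Finset ℕ) (s1 : ℕ → ULift.{u} ℤ) (s2 : ℕ → ULift.{u} ℤ × Bool)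
    (h : Sim (3 * m) vv s1 s2) (x : ℕ) (a : ULift.{u} ℤ) :
    ∃ b, Sim m (insert x vv) (Function.update s1 x a) (Function.update s2 x b) := by
  have key : ∃ b : ULift.{u} ℤ × Bool, ∀ y ∈ vv, tG1 m a (s1 y) = tG2 m b (s2 y) := by
    by_cases hcase : ∃ y ∈ vv, (a.down - (s1 y).down).natAbs ≤ 2 * m
    · obtain ⟨y0, hy0v, hy0⟩ := hcase
      refine ⟨(⟨(s2 y0).1.down + (a.down - (s1 y0).down)⟩, (s2 y0).2), ?_⟩
      intro y hyv
      have hpair := h y0 hy0v y hyv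
      by_cases hε : ((s1 y0).down - (s1 y).down).natAbs ≤ 3 * m
      · have h1 : tG1 (3 * m) (s1 y0) (s1 y) = some ((s1 y0).down - (s1 y).down) := by
          unfold tG1 dclampZ
          rw [if_pos hε]
        rw [h1] at hpair
        have hcomp : (s2 y0).2 = (s2 y).2 := by
          by_contra hcc
          rw [show tG2 (3 * m) (s2 y0) (s2 y) = none from if_neg hcc] at hpair
          cases hpair
        have hdiff : (s2 y0).1.down - (s2 y).1.down = (s1 y0).down - (s1 y).down := by
          rw [show tG2 (3 * m) (s2 y0) (s2 y)
              = dclampZ (3 * m) ((s2 y0).1.down - (s2 y).1.down) from if_pos hcomp] at hpair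
          unfold dclampZ at hpair
          by_cases h2 : ((s2 y0).1.down - (s2 y).1.down).natAbs ≤ 3 * m
          · rw [if_pos h2] at hpair
            injection hpair with hpair
            omega
          · rw [if_neg h2] at hpair
            cases hpair
        show dclampZ m (a.down - (s1 y).down) =
          if (s2 y0).2 = (s2 y).2 then
            dclampZ m ((s2 y0).1.down + (a.down - (s1 y0).down) - (s2 y).1.down) else none
        rw [if_pos hcomp]
        congr 1
        omega
      · have h1 : tG1 (3 * m) (s1 y0) (s1 y) = none := by
          unfold tG1 dclampZ
          rw [if_neg hε]
        rw [h1] at hpair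
        show dclampZ m (a.down - (s1 y).down) =
          if (s2 y0).2 = (s2 y).2 then
            dclampZ m ((s2 y0).1.down + (a.down - (s1 y0).down) - (s2 y).1.down) else none
        have hg1 : dclampZ m (a.down - (s1 y).down) = none := by
          rw [dclampZ_eq_none_iff]; omega
        rw [hg1]
        by_cases hcc : (s2 y0).2 = (s2 y).2
        · rw [if_pos hcc]
          have h2 : 3 * m < ((s2 y0).1.down - (s2 y).1.down).natAbs := by
            rw [show tG2 (3 * m) (s2 y0) (s2 y)
                = dclampZ (3 * m) ((s2 y0).1.down - (s2 y).1.down) from if_pos hcc] at hpair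
            exact dclampZ_eq_none_iff.mp hpair.symm
          symm
          rw [dclampZ_eq_none_iff]
          omega
        · rw [if_neg hcc]
    · push_neg at hcase
      obtain ⟨c, hc⟩ : ∃ c : ℤ, ∀ y ∈ vv, (s2 y).1.down + m < c := by
        rcases Finset.eq_empty_or_nonempty vv with rfl | hvne
        · exact ⟨0, by simp⟩
        · refine ⟨(vv.image fun y => (s2 y).1.down).max' (hvne.image _) + m + 1, ?_⟩
          intro y hy
          have := Finset.le_max' (vv.image fun y => (s2 y).1.down) _
            (Finset.mem_image_of_mem _ hy)
          omega
      refine ⟨(⟨c⟩, false), ?_⟩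
      intro y hyv
      have hg1 : dclampZ m (a.down - (s1 y).down) = none := by
        rw [dclampZ_eq_none_iff]
        have := hcase y hyv
        omega
      show dclampZ m (a.down - (s1 y).down) =
        if false = (s2 y).2 then dclampZ m (c - (s2 y).1.down) else none
      rw [hg1]
      by_cases hcc : false = (s2 y).2
      · rw [if_pos hcc]
        symm
        rw [dclampZ_eq_none_iff]
        have := hc y hyv
        omega
      · rw [if_neg hcc]
  obtain ⟨b, hb⟩ := key
  refine ⟨b, ?_⟩
  intro x' hx' y' hy'
  by_cases hxx : x' = x <;> by_cases hyy : y' = x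
  · subst hxx; subst hyy
    rw [Function.update_self, Function.update_self]
    show dclampZ m (a.down - a.down) = if b.2 = b.2 then dclampZ m (b.1.down - b.1.down) else none
    rw [if_pos rfl]
    congr 1
    ring
  · subst hxx
    have hy'v : y' ∈ vv := by
      rcases Finset.mem_insert.mp hy' with h' | h'
      · exact absurd h' hyy
      · exact h'
    rw [Function.update_self, Function.update_of_ne hyy, Function.update_self,
      Function.update_of_ne hyy]
    exact hb y' hy'v
  · subst hyy
    have hx'v : x' ∈ vv := by
      rcases Finset.mem_insert.mp hx' with h' | h'
      · exact absurd h' hxx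
      · exact h'
    rw [Function.update_of_ne hxx, Function.update_self, Function.update_of_ne hxx,
      Function.update_self]
    rw [tG1_swap, tG2_swap, hb x' hx'v]
  · have hx'v : x' ∈ vv := by
      rcases Finset.mem_insert.mp hx' with h' | h'
      · exact absurd h' hxx
      · exact h'
    have hy'v : y' ∈ vv := by
      rcases Finset.mem_insert.mp hy' with h' | h'
      · exact absurd h' hyy
      · exact h'
    rw [Function.update_of_ne hxx, Function.update_of_ne hyy, Function.update_of_ne hxx,
      Function.update_of_ne hyy]
    exact sim_mono (by omega) h x' hx'v y' hy'v

theorem back (m : ℕ) (vv : Finset ℕ) (s1 : ℕ → ULift.{u} ℤ) (s2 : ℕ → ULift.{u} ℤ × Bool)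
    (h : Sim (3 * m) vv s1 s2) (x : ℕ) (b : ULift.{u} ℤ × Bool) :
    ∃ a, Sim m (insert x vv) (Function.update s1 x a) (Function.update s2 x b) := by
  have key : ∃ a : ULift.{u} ℤ, ∀ y ∈ vv, tG1 m a (s1 y) = tG2 m b (s2 y) := by
    by_cases hcase : ∃ y ∈ vv, (s2 y).2 = b.2 ∧ (b.1.down - (s2 y).1.down).natAbs ≤ 2 * m
    · obtain ⟨y0, hy0v, hy0c, hy0⟩ := hcase
      refine ⟨⟨(s1 y0).down + (b.1.down - (s2 y0).1.down)⟩, ?_⟩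
      intro y hyv
      have hpair := h y0 hy0v y hyv
      by_cases hsame : (s2 y0).2 = (s2 y).2 ∧ ((s2 y0).1.down - (s2 y).1.down).natAbs ≤ 3 * m
      · have h2 : tG2 (3 * m) (s2 y0) (s2 y) = some ((s2 y0).1.down - (s2 y).1.down) := by
          unfold tG2 dclampZ
          rw [if_pos hsame.1, if_pos hsame.2]
        rw [h2] at hpair
        have hdiff : (s1 y0).down - (s1 y).down = (s2 y0).1.down - (s2 y).1.down := by
          unfold tG1 dclampZ at hpair
          by_cases h3 : ((s1 y0).down - (s1 y).down).natAbs ≤ 3 * m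
          · rw [if_pos h3] at hpair
            exact Option.some.inj hpair
          · rw [if_neg h3] at hpair
            cases hpair
        show dclampZ m ((s1 y0).down + (b.1.down - (s2 y0).1.down) - (s1 y).down) =
          if b.2 = (s2 y).2 then dclampZ m (b.1.down - (s2 y).1.down) else none
        rw [if_pos (by rw [← hsame.1, hy0c])]
        congr 1
        omega
      · have h2 : tG2 (3 * m) (s2 y0) (s2 y) = none := by
          unfold tG2 dclampZ
          by_cases hcc : (s2 y0).2 = (s2 y).2
          · rw [if_pos hcc, if_neg (fun hh => hsame ⟨hcc, hh⟩)]
          · rw [if_neg hcc]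
        rw [h2] at hpair
        have h3 : 3 * m < ((s1 y0).down - (s1 y).down).natAbs := tG1_eq_none_iff.mp hpair
        show dclampZ m ((s1 y0).down + (b.1.down - (s2 y0).1.down) - (s1 y).down) =
          if b.2 = (s2 y).2 then dclampZ m (b.1.down - (s2 y).1.down) else none
        have hg1 : dclampZ m ((s1 y0).down + (b.1.down - (s2 y0).1.down) - (s1 y).down)
            = none := by
          rw [dclampZ_eq_none_iff]
          omega
        rw [hg1]
        by_cases hcc : b.2 = (s2 y).2
        · rw [if_pos hcc]
          have hcc0 : (s2 y0).2 = (s2 y).2 := by rw [hy0c, hcc]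
          have h4 : 3 * m < ((s2 y0).1.down - (s2 y).1.down).natAbs := by
            by_contra h5
            exact hsame ⟨hcc0, by omega⟩
          symm
          rw [dclampZ_eq_none_iff]
          omega
        · rw [if_neg hcc]
    · push_neg at hcase
      obtain ⟨c, hc⟩ : ∃ c : ℤ, ∀ y ∈ vv, (s1 y).down + m < c := by
        rcases Finset.eq_empty_or_nonempty vv with rfl | hvne
        · exact ⟨0, by simp⟩
        · refine ⟨(vv.image fun y => (s1 y).down).max' (hvne.image _) + m + 1, ?_⟩
          intro y hy
          have := Finset.le_max' (vv.image fun y => (s1 y).down) _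
            (Finset.mem_image_of_mem _ hy)
          omega
      refine ⟨⟨c⟩, ?_⟩
      intro y hyv
      have hg1 : dclampZ m (c - (s1 y).down) = none := by
        rw [dclampZ_eq_none_iff]
        have := hc y hyv
        omega
      show dclampZ m (c - (s1 y).down) =
        if b.2 = (s2 y).2 then dclampZ m (b.1.down - (s2 y).1.down) else none
      rw [hg1]
      by_cases hcc : b.2 = (s2 y).2
      · rw [if_pos hcc]
        have := hcase y hyv hcc.symm
        symm
        rw [dclampZ_eq_none_iff]
        omega
      · rw [if_neg hcc]
  obtain ⟨a, ha⟩ := key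
  refine ⟨a, ?_⟩
  intro x' hx' y' hy'
  by_cases hxx : x' = x <;> by_cases hyy : y' = x
  · subst hxx; subst hyy
    rw [Function.update_self, Function.update_self]
    show dclampZ m (a.down - a.down) = if b.2 = b.2 then dclampZ m (b.1.down - b.1.down) else none
    rw [if_pos rfl]
    congr 1
    ring
  · subst hxx
    have hy'v : y' ∈ vv := by
      rcases Finset.mem_insert.mp hy' with h' | h'
      · exact absurd h' hyy
      · exact h'
    rw [Function.update_self, Function.update_of_ne hyy, Function.update_self,
      Function.update_of_ne hyy]
    exact ha y' hy'v
  · subst hyy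
    have hx'v : x' ∈ vv := by
      rcases Finset.mem_insert.mp hx' with h' | h'
      · exact absurd h' hxx
      · exact h'
    rw [Function.update_of_ne hxx, Function.update_self, Function.update_of_ne hxx,
      Function.update_self]
    rw [tG1_swap, tG2_swap, ha x' hx'v]
  · have hx'v : x' ∈ vv := by
      rcases Finset.mem_insert.mp hx' with h' | h'
      · exact absurd h' hxx
      · exact h'
    have hy'v : y' ∈ vv := by
      rcases Finset.mem_insert.mp hy' with h' | h'
      · exact absurd h' hyy
      · exact h'
    rw [Function.update_of_ne hxx, Function.update_of_ne hyy, Function.update_of_ne hxx,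
      Function.update_of_ne hyy]
    exact sim_mono (by omega) h x' hx'v y' hy'v

end Transfer

section MainTransfer

theorem transfer : ∀ (ψ : SCLFormula binVocab), ψ.IsFO → ∀ (k : ℕ), qr ψ ≤ k →
    ∀ (vv : Finset ℕ) (s1 : ℕ → (G1.{u}).Dom) (s2 : ℕ → (G2.{u}).Dom),
    (∀ z ∈ ψ.freeVars, z ∈ vv) → Sim (3 ^ k) vv s1 s2 →
    (FOSat G1.{u} s1 ψ ↔ FOSat G2.{u} s2 ψ) := by
  intro ψ
  induction ψ with
  | bot => intro _ k _ vv s1 s2 _ _; simp only [FOSat]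
  | eq x y =>
      intro _ k _ vv s1 s2 hfv hsim
      have hx : x ∈ vv := hfv x (by simp [SCLFormula.freeVars])
      have hy : y ∈ vv := hfv y (by simp [SCLFormula.freeVars])
      have hp := hsim x hx y hy
      simp only [FOSat]
      constructor
      · intro he
        rw [he] at hp
        have h0 : tG1 (3 ^ k) (s1 y) (s1 y) = some 0 := by
          unfold tG1 dclampZ
          rw [show (s1 y).down - (s1 y).down = 0 by ring]
          simp
        rw [h0] at hp
        unfold tG2 dclampZ at hp
        by_cases hc : (s2 x).2 = (s2 y).2
        · rw [if_pos hc] at hp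
          by_cases h2 : ((s2 x).1.down - (s2 y).1.down).natAbs ≤ 3 ^ k
          · rw [if_pos h2] at hp
            have h3 := Option.some.inj hp
            have hd : (s2 x).1.down = (s2 y).1.down := by omega
            exact Prod.ext (ULift.down_injective hd) hc
          · rw [if_neg h2] at hp; cases hp
        · rw [if_neg hc] at hp; cases hp
      · intro he
        rw [he] at hp
        have h0 : tG2 (3 ^ k) (s2 y) (s2 y) = some 0 := by
          unfold tG2 dclampZ
          rw [if_pos rfl, show (s2 y).1.down - (s2 y).1.down = 0 by ring]
          simp
        rw [h0] at hp
        unfold tG1 dclampZ at hp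
        by_cases h2 : ((s1 x).down - (s1 y).down).natAbs ≤ 3 ^ k
        · rw [if_pos h2] at hp
          have h3 := Option.some.inj hp
          have hd : (s1 x).down = (s1 y).down := by omega
          exact ULift.down_injective hd
        · rw [if_neg h2] at hp; cases hp
  | rel R a =>
      intro _ k _ vv s1 s2 hfv hsim
      have hone : 1 ≤ 3 ^ k := Nat.one_le_pow k 3 (by norm_num)
      have hx : a ⟨0, Nat.zero_lt_two⟩ ∈ vv :=
        hfv _ (Finset.mem_image_of_mem a (Finset.mem_univ _))
      have hy : a ⟨1, Nat.one_lt_two⟩ ∈ vv :=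
        hfv _ (Finset.mem_image_of_mem a (Finset.mem_univ _))
      have hp := hsim _ hx _ hy
      show adjZ (s1 (a ⟨0, Nat.zero_lt_two⟩)).down (s1 (a ⟨1, Nat.one_lt_two⟩)).down ↔
        ((s2 (a ⟨0, Nat.zero_lt_two⟩)).2 = (s2 (a ⟨1, Nat.one_lt_two⟩)).2 ∧
          adjZ (s2 (a ⟨0, Nat.zero_lt_two⟩)).1.down (s2 (a ⟨1, Nat.one_lt_two⟩)).1.down)
      set p := s1 (a ⟨0, Nat.zero_lt_two⟩) with hpdef
      set q := s1 (a ⟨1, Nat.one_lt_two⟩) with hqdef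
      set p' := s2 (a ⟨0, Nat.zero_lt_two⟩) with hpdef'
      set q' := s2 (a ⟨1, Nat.one_lt_two⟩) with hqdef'
      have hadj1 : adjZ p.down q.down ↔ (p.down - q.down).natAbs = 1 := by
        unfold adjZ; omega
      have hadj2 : adjZ p'.1.down q'.1.down ↔ (p'.1.down - q'.1.down).natAbs = 1 := by
        unfold adjZ; omega
      unfold tG1 tG2 dclampZ at hp
      constructor
      · intro h1
        rw [hadj1] at h1
        rw [if_pos (by omega : (p.down - q.down).natAbs ≤ 3 ^ k)] at hp
        by_cases hc : p'.2 = q'.2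
        · rw [if_pos hc] at hp
          by_cases h2 : (p'.1.down - q'.1.down).natAbs ≤ 3 ^ k
          · rw [if_pos h2] at hp
            have h3 := Option.some.inj hp
            exact ⟨hc, hadj2.mpr (by omega)⟩
          · rw [if_neg h2] at hp; cases hp
        · rw [if_neg hc] at hp; cases hp
      · rintro ⟨hc, h1⟩
        rw [hadj2] at h1
        rw [if_pos hc, if_pos (by omega : (p'.1.down - q'.1.down).natAbs ≤ 3 ^ k)] at hp
        by_cases h2 : (p.down - q.down).natAbs ≤ 3 ^ k
        · rw [if_pos h2] at hp
          have h3 := Option.some.inj hp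
          exact hadj1.mpr (by omega)
        · rw [if_neg h2] at hp; cases hp
  | claim L => intro hFO; exact hFO.elim
  | not χ ih =>
      intro hFO k hk vv s1 s2 hfv hsim
      simp only [FOSat]
      exact not_congr (ih hFO k hk vv s1 s2 hfv hsim)
  | and χ₁ χ₂ ih1 ih2 =>
      intro hFO k hk vv s1 s2 hfv hsim
      simp only [FOSat]
      have hk1 : qr χ₁ ≤ k := le_trans (le_max_left _ _) hk
      have hk2 : qr χ₂ ≤ k := le_trans (le_max_right _ _) hk
      exact and_congr
        (ih1 hFO.1 k hk1 vv s1 s2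
          (fun z hz => hfv z (Finset.mem_union_left _ hz)) hsim)
        (ih2 hFO.2 k hk2 vv s1 s2
          (fun z hz => hfv z (Finset.mem_union_right _ hz)) hsim)
  | or χ₁ χ₂ ih1 ih2 =>
      intro hFO k hk vv s1 s2 hfv hsim
      simp only [FOSat]
      have hk1 : qr χ₁ ≤ k := le_trans (le_max_left _ _) hk
      have hk2 : qr χ₂ ≤ k := le_trans (le_max_right _ _) hk
      exact or_congr
        (ih1 hFO.1 k hk1 vv s1 s2
          (fun z hz => hfv z (Finset.mem_union_left _ hz)) hsim)
        (ih2 hFO.2 k hk2 vv s1 s2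
          (fun z hz => hfv z (Finset.mem_union_right _ hz)) hsim)
  | ex x χ ih =>
      intro hFO k hk vv s1 s2 hfv hsim
      obtain ⟨k', rfl⟩ : ∃ k', k = k' + 1 := by
        have : qr χ + 1 ≤ k := hk
        exact ⟨k - 1, by omega⟩
      have hk' : qr χ ≤ k' := by
        have : qr χ + 1 ≤ k' + 1 := hk
        omega
      have hsim' : Sim (3 * 3 ^ k') vv s1 s2 := by
        rw [show 3 * 3 ^ k' = 3 ^ (k' + 1) by rw [pow_succ]; ring]
        exact hsim
      have hfv' : ∀ z ∈ χ.freeVars, z ∈ insert x vv := by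
        intro z hz
        by_cases hzx : z = x
        · subst hzx; exact Finset.mem_insert_self _ _
        · refine Finset.mem_insert_of_mem (hfv z ?_)
          simp only [SCLFormula.freeVars, Finset.mem_sdiff, Finset.mem_singleton]
          exact ⟨hz, hzx⟩
      simp only [FOSat]
      constructor
      · rintro ⟨aw, haw⟩
        obtain ⟨bw, hsimU⟩ := forth (3 ^ k') vv s1 s2 hsim' x aw
        exact ⟨bw, (ih hFO k' hk' _ _ _ hfv' hsimU).mp haw⟩
      · rintro ⟨bw, hbw⟩
        obtain ⟨aw, hsimU⟩ := back (3 ^ k') vv s1 s2 hsim' x bw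
        exact ⟨aw, (ih hFO k' hk' _ _ _ hfv' hsimU).mpr hbw⟩
  | all x χ ih =>
      intro hFO k hk vv s1 s2 hfv hsim
      obtain ⟨k', rfl⟩ : ∃ k', k = k' + 1 := by
        have : qr χ + 1 ≤ k := hk
        exact ⟨k - 1, by omega⟩
      have hk' : qr χ ≤ k' := by
        have : qr χ + 1 ≤ k' + 1 := hk
        omega
      have hsim' : Sim (3 * 3 ^ k') vv s1 s2 := by
        rw [show 3 * 3 ^ k' = 3 ^ (k' + 1) by rw [pow_succ]; ring]
        exact hsim
      have hfv' : ∀ z ∈ χ.freeVars, z ∈ insert x vv := by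
        intro z hz
        by_cases hzx : z = x
        · subst hzx; exact Finset.mem_insert_self _ _
        · refine Finset.mem_insert_of_mem (hfv z ?_)
          simp only [SCLFormula.freeVars, Finset.mem_sdiff, Finset.mem_singleton]
          exact ⟨hz, hzx⟩
      simp only [FOSat]
      constructor
      · intro h1 bw
        obtain ⟨aw, hsimU⟩ := back (3 ^ k') vv s1 s2 hsim' x bw
        exact (ih hFO k' hk' _ _ _ hfv' hsimU).mp (h1 aw)
      · intro h2 aw
        obtain ⟨bw, hsimU⟩ := forth (3 ^ k') vv s1 s2 hsim' x aw
        exact (ih hFO k' hk' _ _ _ hfv' hsimU).mpr (h2 bw)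
  | lab L χ ih => intro hFO; exact hFO.elim

theorem bnd_transfer (φ : SCLFormula binVocab) (hs : φ.freeVars = ∅)
    (h1 : ∀ s : ℕ → (G1.{u}).Dom, BndTrue G1.{u} s φ) :
    ∀ s : ℕ → (G2.{u}).Dom, BndTrue G2.{u} s φ := by
  intro s2
  obtain ⟨n, hn⟩ := dirB G1.{u} φ (fun _ => ⟨0⟩) (h1 (fun _ => ⟨0⟩))
  have hFO : (approximant φ n).IsFO := isFO_approx n φ (fun _ => none) true
  have hfree := freeVars_approximant φ n hs
  have htrans := transfer (approximant φ n) hFO (qr _) le_rfl ∅ (fun _ => ⟨0⟩) s2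
    (fun z hz => by rw [hfree] at hz; cases hz)
    (fun z hz => absurd hz (Finset.notMem_empty z))
  exact dirA G2.{u} φ s2 n (htrans.mp hn)

end MainTransfer

/-- The class of (finite and infinite) connected graphs is
not definable in BndSCL.  Moreover `𝔊₁` and `𝔊₂` are elementarily
equivalent, `𝔊₁` is connected, `𝔊₂` is not, and every BndSCL sentence true
in `𝔊₁` is true in `𝔊₂`. -/
theorem connectivity_not_definable_in_BndSCL :
    (¬ ∃ φ : SCLFormula binVocab, φ.freeVars = ∅ ∧
        ∀ M : Struct.{u} binVocab, IsGraph M →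
          ((∀ s : ℕ → M.Dom, BndTrue M s φ) ↔ GraphConnected M)) ∧
    (∀ φ : SCLFormula binVocab, φ.IsFO → φ.freeVars = ∅ →
        ((∀ s : ℕ → (G1.{u}).Dom, FOSat G1.{u} s φ) ↔
          (∀ s : ℕ → (G2.{u}).Dom, FOSat G2.{u} s φ))) ∧
    GraphConnected G1.{u} ∧
    ¬ GraphConnected G2.{u} ∧
    (∀ φ : SCLFormula binVocab, φ.freeVars = ∅ →
        (∀ s : ℕ → (G1.{u}).Dom, BndTrue G1.{u} s φ) →
        (∀ s : ℕ → (G2.{u}).Dom, BndTrue G2.{u} s φ)) := by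
  have part2 : ∀ φ : SCLFormula binVocab, φ.IsFO → φ.freeVars = ∅ →
      ((∀ s : ℕ → (G1.{u}).Dom, FOSat G1.{u} s φ) ↔
        (∀ s : ℕ → (G2.{u}).Dom, FOSat G2.{u} s φ)) := by
    intro φ hFO hsent
    constructor
    · intro h1 s2
      exact (transfer φ hFO (qr φ) le_rfl ∅ (fun _ => ⟨0⟩) s2
        (fun z hz => by rw [hsent] at hz; cases hz)
        (fun z hz => absurd hz (Finset.notMem_empty z))).mp (h1 _)
    · intro h2 s1
      exact (transfer φ hFO (qr φ) le_rfl ∅ s1 (fun _ => (⟨0⟩, false))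
        (fun z hz => by rw [hsent] at hz; cases hz)
        (fun z hz => absurd hz (Finset.notMem_empty z))).mpr (h2 _)
  have part5 : ∀ φ : SCLFormula binVocab, φ.freeVars = ∅ →
      (∀ s : ℕ → (G1.{u}).Dom, BndTrue G1.{u} s φ) →
      (∀ s : ℕ → (G2.{u}).Dom, BndTrue G2.{u} s φ) := fun φ hs h1 => bnd_transfer φ hs h1
  refine ⟨?_, part2, g1_connected, g2_not_connected, part5⟩
  rintro ⟨φ, hsent, hdef⟩
  have h1 : ∀ s : ℕ → (G1.{u}).Dom, BndTrue G1.{u} s φ :=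
    (hdef G1.{u} isGraph_G1).mpr g1_connected
  exact g2_not_connected ((hdef G2.{u} isGraph_G2).mp (part5 φ hsent h1))
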